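/- arXiv:cond-mat/0104295 — 10 statements merged into one kernel-verified Lean document; each statement's English description precedes it below -/
import Mathlib

section
/- Fix a confidence level α ∈ (0,1) and a probability space (Ω,𝒜,P). For real-valued random variables X, Y on (Ω,𝒜,P) with E[X⁻] < ∞ and E[Y⁻] < ∞, the Expected Shortfall ES_α is a coherent risk measure: (i) monotonicity: if X ≥ 0 almost surely then ES_α(X) ≤ 0; (ii) sub-additivity: ES_α(X+Y) ≤ ES_α(X) + ES_α(Y); (iii) positive homogeneity: for every h > 0, ES_α(h·X) = h·ES_α(X); (iv) translation invariance: for every a ∈ ℝ, ES_α(X + a) = ES_α(X) − a. -/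
open MeasureTheory ProbabilityTheory Filter
open scoped Classical
open scoped Topology

noncomputable section

variable {Ω : Type*} [MeasurableSpace Ω]

/-- Lower α-quantile: inf {x | P[X ≤ x] ≥ α}. -/
def lowerQuantile (P : Measure Ω) (X : Ω → ℝ) (α : ℝ) : ℝ :=
  sInf {x : ℝ | α ≤ (P {ω | X ω ≤ x}).toReal}

/-- Upper α-quantile: inf {x | P[X ≤ x] > α}. -/
def upperQuantile (P : Measure Ω) (X : Ω → ℝ) (α : ℝ) : ℝ :=
  sInf {x : ℝ | α < (P {ω | X ω ≤ x}).toReal}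

/-- α-tail mean. -/
def tailMean (P : Measure Ω) (X : Ω → ℝ) (α : ℝ) : ℝ :=
  α⁻¹ * ((∫ ω in {ω | X ω ≤ lowerQuantile P X α}, X ω ∂P)
    + lowerQuantile P X α * (α - (P {ω | X ω ≤ lowerQuantile P X α}).toReal))

/-- Expected Shortfall. -/
def ES (P : Measure Ω) (X : Ω → ℝ) (α : ℝ) : ℝ := - tailMean P X α

/-- Conditional expectation given an event: E[X | A] = E[X·1_A] / P[A]. -/
def condExpEvent (P : Measure Ω) (X : Ω → ℝ) (A : Set Ω) : ℝ :=
  (∫ ω in A, X ω ∂P) / (P A).toReal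

/-- Lower tail conditional expectation. -/
def TCElow (P : Measure Ω) (X : Ω → ℝ) (α : ℝ) : ℝ :=
  - condExpEvent P X {ω | X ω ≤ lowerQuantile P X α}

/-- Upper tail conditional expectation. -/
def TCEup (P : Measure Ω) (X : Ω → ℝ) (α : ℝ) : ℝ :=
  - condExpEvent P X {ω | X ω ≤ upperQuantile P X α}

/-- Worst conditional expectation. -/
def WCE (P : Measure Ω) (X : Ω → ℝ) (α : ℝ) : ℝ :=
  - sInf {y : ℝ | ∃ A : Set Ω, MeasurableSet A ∧ α < (P A).toReal ∧ y = condExpEvent P X A}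

/-- Conditional value-at-risk. -/
def CVaR (P : Measure Ω) (X : Ω → ℝ) (α : ℝ) : ℝ :=
  sInf {y : ℝ | ∃ s : ℝ, y = (∫ ω, max (-(X ω - s)) 0 ∂P) / α - s}

/-- Modified indicator 1^{(α)}_{X ≤ x}. -/
def modInd (P : Measure Ω) (X : Ω → ℝ) (α x : ℝ) (ω : Ω) : ℝ :=
  if P {a | X a = x} = 0 then Set.indicator {a | X a ≤ x} (fun _ => (1 : ℝ)) ω
  else Set.indicator {a | X a ≤ x} (fun _ => (1 : ℝ)) ω
    + ((α - (P {a | X a ≤ x}).toReal) / (P {a | X a = x}).toReal)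
      * Set.indicator {a | X a = x} (fun _ => (1 : ℝ)) ω

/-- Sum of the k smallest entries of (X 0 ω, ..., X (n-1) ω). -/
def tailSum (Xs : ℕ → Ω → ℝ) (n k : ℕ) (ω : Ω) : ℝ :=
  ((List.insertionSort (· ≤ ·) (List.ofFn fun i : Fin n => Xs i ω)).take k).sum


namespace ESAux

variable {P : Measure Ω} [IsProbabilityMeasure P] {α : ℝ} {Z : Ω → ℝ}

lemma F_mono (P : Measure Ω) [IsProbabilityMeasure P] (Z : Ω → ℝ) {a b : ℝ} (hab : a ≤ b) :
    (P {ω | Z ω ≤ a}).toReal ≤ (P {ω | Z ω ≤ b}).toReal :=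
  ENNReal.toReal_mono (measure_ne_top _ _) (measure_mono fun ω h => le_trans h hab)

lemma S_nonempty (hZ : Measurable Z) (hα : α < 1) :
    ∃ x : ℝ, α ≤ (P {ω | Z ω ≤ x}).toReal := by
  have hmono : Monotone (fun n : ℕ => {ω | Z ω ≤ (n : ℝ)}) := by
    intro n m hnm ω (h : Z ω ≤ n)
    exact le_trans h (by exact_mod_cast hnm)
  have hU : (⋃ n : ℕ, {ω | Z ω ≤ (n : ℝ)}) = Set.univ := by
    ext ω; simp only [Set.mem_iUnion, Set.mem_univ, iff_true]
    obtain ⟨n, hn⟩ := exists_nat_ge (Z ω)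
    exact ⟨n, hn⟩
  have ht : Tendsto (fun n : ℕ => P {ω | Z ω ≤ (n : ℝ)}) atTop (𝓝 (P Set.univ)) := by
    simpa [hU, Function.comp_def] using tendsto_measure_iUnion_atTop (μ := P) hmono
  have ht2 : Tendsto (fun n : ℕ => (P {ω | Z ω ≤ (n : ℝ)}).toReal) atTop (𝓝 1) := by
    have := (ENNReal.tendsto_toReal (measure_ne_top P Set.univ)).comp ht
    simpa [measure_univ, Function.comp_def] using this
  have := (ht2.eventually (eventually_ge_nhds hα)).exists
  obtain ⟨n, hn⟩ := this
  exact ⟨n, hn⟩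

lemma exists_lt (hZ : Measurable Z) (hα : 0 < α) :
    ∃ x : ℝ, (P {ω | Z ω ≤ x}).toReal < α := by
  have hanti : Antitone (fun n : ℕ => {ω | Z ω ≤ -(n : ℝ)}) := by
    intro n m hnm ω (h : Z ω ≤ -(m : ℝ))
    exact le_trans h (by simp; exact_mod_cast hnm)
  have hI : (⋂ n : ℕ, {ω | Z ω ≤ -(n : ℝ)}) = ∅ := by
    ext ω; simp only [Set.mem_iInter, Set.mem_empty_iff_false, iff_false]
    intro h
    obtain ⟨n, hn⟩ := exists_nat_ge (-(Z ω))
    have := h (n+1); simp only [Set.mem_setOf_eq] at this; push_cast at this ⊢; linarith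
  have ht := tendsto_measure_iInter_atTop (μ := P)
      (s := fun n : ℕ => {ω | Z ω ≤ -(n : ℝ)})
      (fun n => (hZ measurableSet_Iic).nullMeasurableSet) hanti ⟨0, measure_ne_top _ _⟩
  rw [hI] at ht
  have ht2 : Tendsto (fun n : ℕ => (P {ω | Z ω ≤ -(n : ℝ)}).toReal) atTop (𝓝 0) := by
    have := (ENNReal.tendsto_toReal (by simp : P (∅ : Set Ω) ≠ ⊤)).comp ht
    simpa [Function.comp_def] using this
  obtain ⟨n, hn⟩ := (ht2.eventually (eventually_lt_nhds hα)).exists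
  exact ⟨-(n : ℝ), hn⟩

lemma S_bddBelow (hZ : Measurable Z) (hα : 0 < α) :
    BddBelow {x : ℝ | α ≤ (P {ω | Z ω ≤ x}).toReal} := by
  obtain ⟨x₀, hx₀⟩ := exists_lt (P := P) hZ hα
  refine ⟨x₀, fun y hy => ?_⟩
  by_contra hxy
  push_neg at hxy
  exact absurd (le_trans hy (F_mono P Z hxy.le)) (not_le.mpr hx₀)

/-- F(q) ≥ α at the lower quantile. -/
lemma alpha_le_F_q (hZ : Measurable Z) (hα : α ∈ Set.Ioo (0:ℝ) 1) :
    α ≤ (P {ω | Z ω ≤ lowerQuantile P Z α}).toReal := by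
  set q := lowerQuantile P Z α with hq
  set S := {x : ℝ | α ≤ (P {ω | Z ω ≤ x}).toReal} with hS
  have hqS : q = sInf S := rfl
  have hne : S.Nonempty := S_nonempty hZ hα.2
  have hbdd : BddBelow S := S_bddBelow hZ hα.1
  -- each q + 1/(n+1) ∈ S
  have hmem : ∀ n : ℕ, α ≤ (P {ω | Z ω ≤ q + 1/(n+1)}).toReal := by
    intro n
    have hpos : (0:ℝ) < 1/(n+1) := by positivity
    obtain ⟨y, hyS, hy⟩ := csInf_lt_iff hbdd hne |>.mp (by rw [← hqS]; linarith : sInf S < q + 1/(n+1))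
    exact le_trans hyS (F_mono P Z hy.le)
  have hanti : Antitone (fun n : ℕ => {ω | Z ω ≤ q + 1/(n+1)}) := by
    intro n m hnm ω (h : Z ω ≤ q + 1/(m+1))
    have hc : ((n:ℝ)+1) ≤ ((m:ℝ)+1) := by exact_mod_cast Nat.succ_le_succ hnm
    have : (1:ℝ)/(m+1) ≤ 1/(n+1) := one_div_le_one_div_of_le (by positivity) hc
    simp only [Set.mem_setOf_eq]; linarith
  have hI : (⋂ n : ℕ, {ω | Z ω ≤ q + 1/(n+1)}) = {ω | Z ω ≤ q} := by
    ext ω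
    simp only [Set.mem_iInter, Set.mem_setOf_eq]
    constructor
    · intro h
      by_contra hc
      push_neg at hc
      obtain ⟨n, hn⟩ := exists_nat_one_div_lt (by linarith : (0:ℝ) < Z ω - q)
      have := h n; linarith
    · intro h n
      have : (0:ℝ) < 1/(n+1) := by positivity
      linarith
  have ht := tendsto_measure_iInter_atTop (μ := P)
      (s := fun n : ℕ => {ω | Z ω ≤ q + 1/(n+1)})
      (fun n => (hZ measurableSet_Iic).nullMeasurableSet) hanti ⟨0, measure_ne_top _ _⟩
  rw [hI] at ht
  have ht2 : Tendsto (fun n : ℕ => (P {ω | Z ω ≤ q + 1/(n+1)}).toReal) atTop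
      (𝓝 (P {ω | Z ω ≤ q}).toReal) :=
    (ENNReal.tendsto_toReal (measure_ne_top _ _)).comp ht
  exact ge_of_tendsto ht2 (Eventually.of_forall hmem)

/-- P(Z < q) ≤ α at the lower quantile. -/
lemma F_lt_q_le_alpha (hZ : Measurable Z) (hα : α ∈ Set.Ioo (0:ℝ) 1) :
    (P {ω | Z ω < lowerQuantile P Z α}).toReal ≤ α := by
  set q := lowerQuantile P Z α with hq
  set S := {x : ℝ | α ≤ (P {ω | Z ω ≤ x}).toReal} with hS
  have hqS : q = sInf S := rfl
  have hbdd : BddBelow S := S_bddBelow hZ hα.1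
  have hnotmem : ∀ n : ℕ, (P {ω | Z ω ≤ q - 1/(n+1)}).toReal < α := by
    intro n
    have hpos : (0:ℝ) < 1/(n+1) := by positivity
    by_contra hc
    push_neg at hc
    have : q ≤ q - 1/(n+1) := hqS ▸ csInf_le hbdd hc
    linarith
  have hmono : Monotone (fun n : ℕ => {ω | Z ω ≤ q - 1/(n+1)}) := by
    intro n m hnm ω (h : Z ω ≤ q - 1/(n+1))
    have hc : ((n:ℝ)+1) ≤ ((m:ℝ)+1) := by exact_mod_cast Nat.succ_le_succ hnm
    have : (1:ℝ)/(m+1) ≤ 1/(n+1) := one_div_le_one_div_of_le (by positivity) hc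
    simp only [Set.mem_setOf_eq]; linarith
  have hU : (⋃ n : ℕ, {ω | Z ω ≤ q - 1/(n+1)}) = {ω | Z ω < q} := by
    ext ω
    simp only [Set.mem_iUnion, Set.mem_setOf_eq]
    constructor
    · rintro ⟨n, hn⟩
      have : (0:ℝ) < 1/(n+1) := by positivity
      linarith
    · intro h
      obtain ⟨n, hn⟩ := exists_nat_one_div_lt (by linarith : (0:ℝ) < q - Z ω)
      exact ⟨n, by linarith⟩
  have ht := tendsto_measure_iUnion_atTop (μ := P)
      (s := fun n : ℕ => {ω | Z ω ≤ q - 1/(n+1)}) hmono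
  rw [hU] at ht
  have ht2 : Tendsto (fun n : ℕ => (P {ω | Z ω ≤ q - 1/(n+1)}).toReal) atTop
      (𝓝 (P {ω | Z ω < q}).toReal) :=
    (ENNReal.tendsto_toReal (measure_ne_top _ _)).comp ht
  exact le_of_tendsto ht2 (Eventually.of_forall fun n => (hnotmem n).le)


lemma integrable_posPart (hZ : Measurable Z) (hZint : Integrable (fun ω => max (-(Z ω)) 0) P)
    (s : ℝ) : Integrable (fun ω => max (s - Z ω) 0) P := by
  refine (Integrable.add (integrable_const (max s 0)) hZint).mono
    (((measurable_const.sub hZ).max measurable_const).aestronglyMeasurable)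
    (Eventually.of_forall fun ω => ?_)
  simp only [Real.norm_eq_abs, Pi.add_apply]
  have hg0 : (0:ℝ) ≤ max s 0 + max (-(Z ω)) 0 :=
    add_nonneg (le_max_right _ _) (le_max_right _ _)
  rw [abs_of_nonneg (le_max_right _ _), abs_of_nonneg hg0]
  rcases le_total (s - Z ω) 0 with h | h
  · rw [max_eq_right h]; exact hg0
  · rw [max_eq_left h]
    have h1 := le_max_left s 0
    have h2 := le_max_left (-(Z ω)) 0
    linarith

lemma integrableOn_le (hZ : Measurable Z) (hZint : Integrable (fun ω => max (-(Z ω)) 0) P)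
    (c : ℝ) : IntegrableOn Z {ω | Z ω ≤ c} P := by
  have hA : MeasurableSet {ω | Z ω ≤ c} := hZ measurableSet_Iic
  refine (Integrable.add (integrable_const |c|) hZint).restrict.mono
    hZ.aestronglyMeasurable.restrict ?_
  rw [ae_restrict_iff' hA]
  refine Eventually.of_forall fun ω (hω : Z ω ≤ c) => ?_
  simp only [Real.norm_eq_abs, Pi.add_apply]
  have hg0 : (0:ℝ) ≤ |c| + max (-(Z ω)) 0 := add_nonneg (abs_nonneg c) (le_max_right _ _)
  rw [abs_of_nonneg hg0]
  rcases le_total (Z ω) 0 with h | h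
  · rw [abs_of_nonpos h]
    have h3 := le_max_left (-(Z ω)) 0
    have h4 := abs_nonneg c
    linarith
  · rw [abs_of_nonneg h]
    have h1 : Z ω ≤ |c| := le_trans hω (le_abs_self c)
    have h2 : (0:ℝ) ≤ max (-(Z ω)) 0 := le_max_right _ _
    linarith

lemma posPart_integral_eq (hZ : Measurable Z) (hZint : Integrable (fun ω => max (-(Z ω)) 0) P)
    (c : ℝ) :
    ∫ ω, max (c - Z ω) 0 ∂P
      = c * (P {ω | Z ω ≤ c}).toReal - ∫ ω in {ω | Z ω ≤ c}, Z ω ∂P := by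
  have hA : MeasurableSet {ω | Z ω ≤ c} := hZ measurableSet_Iic
  have h1 : (fun ω => max (c - Z ω) 0)
      = Set.indicator {ω | Z ω ≤ c} (fun ω => c - Z ω) := by
    funext ω
    by_cases h : Z ω ≤ c
    · rw [Set.indicator_of_mem (show ω ∈ {ω | Z ω ≤ c} from h),
        max_eq_left (by linarith)]
    · rw [Set.indicator_of_notMem (show ω ∉ {ω | Z ω ≤ c} from h),
        max_eq_right (by push_neg at h; linarith)]
  rw [h1, integral_indicator hA,
    integral_sub (integrable_const c) (integrableOn_le hZ hZint c),
    setIntegral_const, measureReal_def, smul_eq_mul, mul_comm]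

lemma tailMean_eq (hZ : Measurable Z) (hZint : Integrable (fun ω => max (-(Z ω)) 0) P)
    (hα : α ∈ Set.Ioo (0:ℝ) 1) :
    tailMean P Z α
      = lowerQuantile P Z α
        - (∫ ω, max (lowerQuantile P Z α - Z ω) 0 ∂P) / α := by
  have hα0 : α ≠ 0 := ne_of_gt hα.1
  rw [tailMean, posPart_integral_eq hZ hZint]
  field_simp
  ring

/-- The key Rockafellar–Uryasev inequality. -/
lemma le_tailMean (hZ : Measurable Z) (hZint : Integrable (fun ω => max (-(Z ω)) 0) P)
    (hα : α ∈ Set.Ioo (0:ℝ) 1) (s : ℝ) :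
    s - (∫ ω, max (s - Z ω) 0 ∂P) / α ≤ tailMean P Z α := by
  have hα0 : (0:ℝ) < α := hα.1
  set q := lowerQuantile P Z α with hq
  rw [tailMean_eq hZ hZint hα, ← hq]
  set Is := ∫ ω, max (s - Z ω) 0 ∂P with hIs
  set Iq := ∫ ω, max (q - Z ω) 0 ∂P with hIq
  have key : α * (s - q) + Iq ≤ Is := by
    rcases le_total q s with hqs | hsq
    · -- q ≤ s
      have hA : MeasurableSet {ω | Z ω ≤ q} := hZ measurableSet_Iic
      have hpt : ∀ ω, max (q - Z ω) 0
          + (s - q) * Set.indicator {ω | Z ω ≤ q} (fun _ => (1:ℝ)) ω ≤ max (s - Z ω) 0 := by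
        intro ω
        by_cases h : Z ω ≤ q
        · rw [Set.indicator_of_mem (show ω ∈ {ω | Z ω ≤ q} from h),
            max_eq_left (by linarith), max_eq_left (by linarith)]
          simp only [mul_one]; linarith
        · push_neg at h
          rw [Set.indicator_of_notMem (show ω ∉ {ω | Z ω ≤ q} from h.not_ge),
            max_eq_right (by linarith)]
          simp only [mul_zero, add_zero]
          exact le_max_right _ _
      have hint1 : Integrable (fun ω => max (q - Z ω) 0
          + (s - q) * Set.indicator {ω | Z ω ≤ q} (fun _ => (1:ℝ)) ω) P :=
        (integrable_posPart hZ hZint q).add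
          (((integrable_const (1:ℝ)).indicator hA).const_mul (s - q))
      have hmono := integral_mono hint1 (integrable_posPart hZ hZint s) hpt
      rw [integral_add (integrable_posPart hZ hZint q)
          (((integrable_const (1:ℝ)).indicator hA).const_mul (s - q)),
        integral_const_mul, integral_indicator_const _ hA] at hmono
      simp only [smul_eq_mul, mul_one, measureReal_def] at hmono
      have hFq := alpha_le_F_q (P := P) hZ hα
      rw [← hq] at hFq
      nlinarith
    · -- s ≤ q
      have hA : MeasurableSet {ω | Z ω < q} := hZ measurableSet_Iio
      have hpt : ∀ ω, max (q - Z ω) 0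
          ≤ max (s - Z ω) 0 + (q - s) * Set.indicator {ω | Z ω < q} (fun _ => (1:ℝ)) ω := by
        intro ω
        by_cases h : Z ω < q
        · rw [Set.indicator_of_mem (show ω ∈ {ω | Z ω < q} from h)]
          rcases le_total (Z ω) s with h2 | h2
          · rw [max_eq_left (by linarith), max_eq_left (by linarith)]
            simp only [mul_one]; linarith
          · have h3 : max (s - Z ω) 0 = 0 := max_eq_right (by linarith)
            have h4 : max (q - Z ω) 0 = q - Z ω := max_eq_left (by linarith)
            rw [h3, h4]; simp only [mul_one]; linarith
        · push_neg at h
          rw [Set.indicator_of_notMem (show ω ∉ {ω | Z ω < q} from h.not_gt),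
            max_eq_right (by linarith)]
          have := le_max_right (s - Z ω) 0
          simp only [mul_zero, add_zero]
          linarith
      have hint2 : Integrable (fun ω => max (s - Z ω) 0
          + (q - s) * Set.indicator {ω | Z ω < q} (fun _ => (1:ℝ)) ω) P :=
        (integrable_posPart hZ hZint s).add
          (((integrable_const (1:ℝ)).indicator hA).const_mul (q - s))
      have hmono := integral_mono (integrable_posPart hZ hZint q) hint2 hpt
      rw [integral_add (integrable_posPart hZ hZint s)
          (((integrable_const (1:ℝ)).indicator hA).const_mul (q - s)),
        integral_const_mul, integral_indicator_const _ hA] at hmono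
      simp only [smul_eq_mul, mul_one, measureReal_def] at hmono
      have hFlt := F_lt_q_le_alpha (P := P) hZ hα
      rw [← hq] at hFlt
      nlinarith
  have h2 : (s - q) + Iq / α ≤ Is / α := by
    rw [← sub_nonneg]
    have heq : Is / α - ((s - q) + Iq / α) = (Is - (α * (s - q) + Iq)) / α := by
      field_simp
    rw [heq]
    exact div_nonneg (by linarith) hα0.le
  linarith


lemma ES_eq (hZ : Measurable Z) (hZint : Integrable (fun ω => max (-(Z ω)) 0) P)
    (hα : α ∈ Set.Ioo (0:ℝ) 1) :
    ES P Z α = (∫ ω, max (lowerQuantile P Z α - Z ω) 0 ∂P) / α - lowerQuantile P Z α := by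
  rw [ES, tailMean_eq hZ hZint hα]; ring

lemma ES_le (hZ : Measurable Z) (hZint : Integrable (fun ω => max (-(Z ω)) 0) P)
    (hα : α ∈ Set.Ioo (0:ℝ) 1) (s : ℝ) :
    ES P Z α ≤ (∫ ω, max (s - Z ω) 0 ∂P) / α - s := by
  have := le_tailMean hZ hZint hα s
  rw [ES]; linarith

end ESAux

theorem es_coherent' (P : Measure Ω) [IsProbabilityMeasure P] (α : ℝ)
    (hα : α ∈ Set.Ioo (0:ℝ) 1)
    (X Y : Ω → ℝ) (hX : Measurable X) (hY : Measurable Y)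
    (hXint : Integrable (fun ω => max (-(X ω)) 0) P)
    (hYint : Integrable (fun ω => max (-(Y ω)) 0) P) :
    ((∀ᵐ ω ∂P, 0 ≤ X ω) → ES P X α ≤ 0) ∧
    (ES P (fun ω => X ω + Y ω) α ≤ ES P X α + ES P Y α) ∧
    (∀ h : ℝ, 0 < h → ES P (fun ω => h * X ω) α = h * ES P X α) ∧
    (∀ a : ℝ, ES P (fun ω => X ω + a) α = ES P X α - a) := by
  have hα0 := hα.1
  refine ⟨?_, ?_, ?_, ?_⟩
  · -- monotonicity
    intro hpos
    have h1 := ESAux.ES_le hX hXint hα 0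
    have h2 : (∫ ω, max (0 - X ω) 0 ∂P) = ∫ ω, (0:ℝ) ∂P := by
      apply integral_congr_ae
      filter_upwards [hpos] with ω hω
      rw [max_eq_right (by linarith)]
    rw [h2, integral_zero] at h1
    simpa using h1
  · -- subadditivity
    set qX := lowerQuantile P X α with hqX
    set qY := lowerQuantile P Y α with hqY
    have hXYm : Measurable (fun ω => X ω + Y ω) := hX.add hY
    have hXYint : Integrable (fun ω => max (-(X ω + Y ω)) 0) P := by
      refine (hXint.add hYint).mono
        (hXYm.neg.max measurable_const).aestronglyMeasurable
        (Eventually.of_forall fun ω => ?_)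
      simp only [Real.norm_eq_abs, Pi.add_apply, zero_sub] at *
      have hg0 : (0:ℝ) ≤ max (-(X ω)) 0 + max (-(Y ω)) 0 :=
        add_nonneg (le_max_right _ _) (le_max_right _ _)
      rw [abs_of_nonneg (le_max_right _ _), abs_of_nonneg hg0]
      have h1 := le_max_left (-(X ω)) 0
      have h2 := le_max_left (-(Y ω)) 0
      rcases le_total (-(X ω + Y ω)) 0 with h | h
      · rw [max_eq_right h]; exact hg0
      · rw [max_eq_left h]; linarith
    have h1 := ESAux.ES_le hXYm hXYint hα (qX + qY)
    have hpt : ∀ ω, max (qX + qY - (X ω + Y ω)) 0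
        ≤ max (qX - X ω) 0 + max (qY - Y ω) 0 := by
      intro ω
      apply max_le
      · have h1 := le_max_left (qX - X ω) 0
        have h2 := le_max_left (qY - Y ω) 0
        linarith
      · exact add_nonneg (le_max_right _ _) (le_max_right _ _)
    have hintsum := integral_mono (ESAux.integrable_posPart hXYm hXYint (qX + qY))
      ((ESAux.integrable_posPart hX hXint qX).add (ESAux.integrable_posPart hY hYint qY)) hpt
    simp only [Pi.add_apply] at hintsum
    rw [integral_add (ESAux.integrable_posPart hX hXint qX)
      (ESAux.integrable_posPart hY hYint qY)] at hintsum
    have hdiv : (∫ ω, max (qX + qY - (X ω + Y ω)) 0 ∂P) / α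
        ≤ ((∫ ω, max (qX - X ω) 0 ∂P) + ∫ ω, max (qY - Y ω) 0 ∂P) / α :=
      div_le_div_of_nonneg_right hintsum hα0.le
    rw [ESAux.ES_eq hX hXint hα, ESAux.ES_eq hY hYint hα, ← hqX, ← hqY]
    calc ES P (fun ω => X ω + Y ω) α
        ≤ (∫ ω, max (qX + qY - (X ω + Y ω)) 0 ∂P) / α - (qX + qY) := h1
      _ ≤ ((∫ ω, max (qX - X ω) 0 ∂P) + ∫ ω, max (qY - Y ω) 0 ∂P) / α - (qX + qY) := by
          linarith
      _ = ((∫ ω, max (qX - X ω) 0 ∂P) / α - qX)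
            + ((∫ ω, max (qY - Y ω) 0 ∂P) / α - qY) := by
          rw [add_div]; ring
  · -- positive homogeneity
    intro h hh
    have hZm : Measurable (fun ω => h * X ω) := hX.const_mul h
    have hmax : ∀ ω, max (-(h * X ω)) 0 = h * max (-(X ω)) 0 := by
      intro ω
      rw [mul_max_of_nonneg _ _ hh.le, mul_zero, mul_neg]
    have hZint : Integrable (fun ω => max (-(h * X ω)) 0) P := by
      simp only [hmax]
      exact hXint.const_mul h
    set q := lowerQuantile P X α with hq
    set qh := lowerQuantile P (fun ω => h * X ω) α with hqh
    have le1 : ES P (fun ω => h * X ω) α ≤ h * ES P X α := by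
      have h1 := ESAux.ES_le hZm hZint hα (h * q)
      have heq : (fun ω => max (h * q - h * X ω) 0) = fun ω => h * max (q - X ω) 0 := by
        funext ω
        rw [mul_max_of_nonneg _ _ hh.le, mul_zero, mul_sub]
      rw [show (∫ ω, max (h * q - h * X ω) 0 ∂P) = h * ∫ ω, max (q - X ω) 0 ∂P by
        rw [← integral_const_mul]; exact congrArg _ heq] at h1
      rw [ESAux.ES_eq hX hXint hα, ← hq]
      calc ES P (fun ω => h * X ω) α ≤ h * (∫ ω, max (q - X ω) 0 ∂P) / α - h * q := h1
        _ = h * ((∫ ω, max (q - X ω) 0 ∂P) / α - q) := by ring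
    have le2 : h * ES P X α ≤ ES P (fun ω => h * X ω) α := by
      have h1 := ESAux.ES_le hX hXint hα (qh / h)
      have heq : (fun ω => max (qh / h - X ω) 0) = fun ω => h⁻¹ * max (qh - h * X ω) 0 := by
        funext ω
        rw [mul_max_of_nonneg _ _ (inv_nonneg.mpr hh.le), mul_zero, mul_sub,
          inv_mul_cancel_left₀ (ne_of_gt hh), div_eq_inv_mul, mul_comm]
      rw [show (∫ ω, max (qh / h - X ω) 0 ∂P) = h⁻¹ * ∫ ω, max (qh - h * X ω) 0 ∂P by
        rw [← integral_const_mul]; exact congrArg _ heq] at h1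
      have h2 : ES P X α ≤ h⁻¹ * (ES P (fun ω => h * X ω) α) := by
        rw [ESAux.ES_eq hZm hZint hα, ← hqh]
        calc ES P X α ≤ h⁻¹ * (∫ ω, max (qh - h * X ω) 0 ∂P) / α - qh / h := h1
          _ = h⁻¹ * ((∫ ω, max (qh - h * X ω) 0 ∂P) / α - qh) := by
              field_simp
      have := mul_le_mul_of_nonneg_left h2 hh.le
      rwa [mul_inv_cancel_left₀ (ne_of_gt hh)] at this
    exact le_antisymm le1 le2
  · -- translation invariance
    intro a
    have hZm : Measurable (fun ω => X ω + a) := hX.add_const a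
    have hZint : Integrable (fun ω => max (-(X ω + a)) 0) P := by
      refine (hXint.add (integrable_const |a|)).mono
        (hZm.neg.max measurable_const).aestronglyMeasurable
        (Eventually.of_forall fun ω => ?_)
      simp only [Real.norm_eq_abs, Pi.add_apply, zero_sub] at *
      have hg0 : (0:ℝ) ≤ max (-(X ω)) 0 + |a| :=
        add_nonneg (le_max_right _ _) (abs_nonneg a)
      rw [abs_of_nonneg (le_max_right _ _), abs_of_nonneg hg0]
      have h1 := le_max_left (-(X ω)) 0
      have h2 := neg_abs_le a
      rcases le_total (-(X ω + a)) 0 with h | h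
      · rw [max_eq_right h]; exact hg0
      · rw [max_eq_left h]; linarith
    set q := lowerQuantile P X α with hq
    set qa := lowerQuantile P (fun ω => X ω + a) α with hqa
    have le1 : ES P (fun ω => X ω + a) α ≤ ES P X α - a := by
      have h1 := ESAux.ES_le hZm hZint hα (q + a)
      have heq : (fun ω => max (q + a - (X ω + a)) 0) = fun ω => max (q - X ω) 0 := by
        funext ω; ring_nf
      rw [heq] at h1
      rw [ESAux.ES_eq hX hXint hα, ← hq]
      calc ES P (fun ω => X ω + a) α ≤ (∫ ω, max (q - X ω) 0 ∂P) / α - (q + a) := h1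
        _ = ((∫ ω, max (q - X ω) 0 ∂P) / α - q) - a := by ring
    have le2 : ES P X α - a ≤ ES P (fun ω => X ω + a) α := by
      have h1 := ESAux.ES_le hX hXint hα (qa - a)
      have heq : (fun ω => max (qa - a - X ω) 0) = fun ω => max (qa - (X ω + a)) 0 := by
        funext ω; ring_nf
      rw [heq] at h1
      rw [ESAux.ES_eq hZm hZint hα, ← hqa]
      calc ES P X α - a ≤ ((∫ ω, max (qa - (X ω + a)) 0 ∂P) / α - (qa - a)) - a := by
            linarith
        _ = (∫ ω, max (qa - (X ω + a)) 0 ∂P) / α - qa := by ring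
    exact le_antisymm le1 le2


/-- Coherence of Expected Shortfall. -/
theorem es_coherent (P : Measure Ω) [IsProbabilityMeasure P] (α : ℝ)
    (hα : α ∈ Set.Ioo (0:ℝ) 1)
    (X Y : Ω → ℝ) (hX : Measurable X) (hY : Measurable Y)
    (hXint : Integrable (fun ω => max (-(X ω)) 0) P)
    (hYint : Integrable (fun ω => max (-(Y ω)) 0) P) :
    ((∀ᵐ ω ∂P, 0 ≤ X ω) → ES P X α ≤ 0) ∧
    (ES P (fun ω => X ω + Y ω) α ≤ ES P X α + ES P Y α) ∧
    (∀ h : ℝ, 0 < h → ES P (fun ω => h * X ω) α = h * ES P X α) ∧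
    (∀ a : ℝ, ES P (fun ω => X ω + a) α = ES P X α - a) :=
  es_coherent' P α hα X Y hX hY hXint hYint

end
end

section
/- If X is a real-valued random variable on a probability space (Ω,𝒜,P) with E[X⁻] < ∞ and α ∈ (0,1) is fixed, then the α-tail mean equals the average of the lower quantiles below level α: TM_α(X) = α⁻¹ · ∫₀^α q_u(X) du, where q_u(X) is the lower u-quantile of X; equivalently, ES_α(X) = −α⁻¹ · ∫₀^α q_u(X) du. -/
open MeasureTheory ProbabilityTheory Filter
open scoped Classical

noncomputable section

variable {Ω : Type*} [MeasurableSpace Ω]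

section AuxQuantile
open Set Topology

namespace TailMeanAux

section Lemmas

/-- quantile of a real measure -/
noncomputable def rQ (μ : Measure ℝ) (u : ℝ) : ℝ := sInf {x : ℝ | u ≤ cdf μ x}

variable {μ : Measure ℝ} [IsProbabilityMeasure μ]

lemma rQ_eq (u : ℝ) : sInf {x : ℝ | u ≤ (μ (Iic x)).toReal} = rQ μ u := by
  unfold rQ
  congr 1
  ext x
  rw [mem_setOf_eq, mem_setOf_eq, cdf_eq_real, measureReal_def]

lemma bddBelow_rQset {u : ℝ} (hu : 0 < u) : BddBelow {x : ℝ | u ≤ cdf μ x} := by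
  obtain ⟨y, hy⟩ : ∃ y, cdf μ y < u :=
    ((tendsto_cdf_atBot μ).eventually_lt_const hu).exists
  refine ⟨y, fun x hx => ?_⟩
  by_contra h
  push_neg at h
  exact absurd (le_trans hx.out (monotone_cdf μ h.le)) (not_le.mpr hy)

lemma nonempty_rQset {u : ℝ} (hu : u < 1) : {x : ℝ | u ≤ cdf μ x}.Nonempty := by
  obtain ⟨y, hy⟩ : ∃ y, u < cdf μ y :=
    ((tendsto_cdf_atTop μ).eventually_const_lt hu).exists
  exact ⟨y, hy.le⟩

lemma rQ_le_iff {u x : ℝ} (hu : 0 < u) (hu1 : u < 1) :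
    rQ μ u ≤ x ↔ u ≤ cdf μ x := by
  constructor
  · intro h
    have key : ∀ y, x < y → u ≤ cdf μ y := by
      intro y hy
      obtain ⟨z, hz, hz2⟩ := Real.lt_sInf_add_pos (nonempty_rQset (μ := μ) hu1)
        (show (0:ℝ) < y - x by linarith)
      refine le_trans hz.out (monotone_cdf μ ?_)
      have hthis : rQ μ u ≤ x := h
      have hq : rQ μ u = sInf {x : ℝ | u ≤ cdf μ x} := rfl
      linarith
    have hrc : Tendsto (cdf μ) (𝓝[>] x) (𝓝 (cdf μ x)) :=
      ((cdf μ).right_continuous x).tendsto.mono_left (nhdsWithin_mono x Ioi_subset_Ici_self)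
    refine ge_of_tendsto hrc ?_
    filter_upwards [self_mem_nhdsWithin] with y hy using key y hy
  · intro h
    exact csInf_le (bddBelow_rQset hu) h

lemma rQ_mono {u v : ℝ} (hu : 0 < u) (huv : u ≤ v) (hv : v < 1) : rQ μ u ≤ rQ μ v := by
  refine csInf_le_csInf (bddBelow_rQset hu) (nonempty_rQset hv) fun x hx => ?_
  exact le_trans huv hx

lemma rQ_lt_iff {u x : ℝ} (hu : 0 < u) (hu1 : u < 1) :
    rQ μ u < x ↔ ∃ y, y < x ∧ u ≤ cdf μ y := by
  constructor
  · intro h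
    refine ⟨(rQ μ u + x) / 2, by linarith, (rQ_le_iff hu hu1).mp (by linarith)⟩
  · rintro ⟨y, hyx, hy⟩
    exact lt_of_le_of_lt ((rQ_le_iff hu hu1).mpr hy) hyx

lemma cdf_lt_of_lt_rQ {α x : ℝ} (hα : 0 < α) (hx : x < rQ μ α) : cdf μ x < α := by
  by_contra h
  push_neg at h
  exact absurd (csInf_le (bddBelow_rQset hα) h) (not_le.mpr hx)

/-- the measure of sublevel sets of the quantile function -/
lemma measure_rQ_lt {α x : ℝ} (hα : α ∈ Set.Ioo (0:ℝ) 1) (hx : x < rQ μ α) :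
    volume ({u : ℝ | rQ μ u < x} ∩ Ioc 0 α) = μ (Iio x) := by
  have hFlt : cdf μ x < α := cdf_lt_of_lt_rQ hα.1 hx
  have hxmeas : μ (Iio x) ≠ ⊤ := measure_ne_top _ _
  have hsub1 : Ioo 0 ((μ (Iio x)).toReal) ⊆ {u : ℝ | rQ μ u < x} ∩ Ioc 0 α := by
    rintro u ⟨hu0, huG⟩
    -- write Iio x as a monotone union
    have hUnion : Iio x = ⋃ n : ℕ, Iic (x - ((n:ℝ) + 1)⁻¹) := by
      ext y
      simp only [mem_Iio, mem_iUnion, mem_Iic]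
      constructor
      · intro hy
        obtain ⟨n, hn⟩ := exists_nat_one_div_lt (show (0:ℝ) < x - y by linarith)
        exact ⟨n, by rw [one_div] at hn; linarith⟩
      · rintro ⟨n, hn⟩
        have : (0:ℝ) < ((n:ℝ) + 1)⁻¹ := by positivity
        linarith
    have hdir : Directed (· ⊆ ·) (fun n : ℕ => Iic (x - ((n:ℝ) + 1)⁻¹)) := by
      refine (Monotone.directed_le ?_)
      intro m n hmn
      refine Iic_subset_Iic.mpr ?_
      have hmn' : (m:ℝ) ≤ (n:ℝ) := Nat.cast_le.mpr hmn
      have h1 : ((n:ℝ) + 1)⁻¹ ≤ ((m:ℝ)+1)⁻¹ := by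
        apply inv_anti₀ (by positivity)
        linarith
      linarith
    have hsup : μ (Iio x) = ⨆ n : ℕ, μ (Iic (x - ((n:ℝ) + 1)⁻¹)) := by
      rw [hUnion]
      exact Directed.measure_iUnion hdir
    have hlt : ENNReal.ofReal u < μ (Iio x) :=
      (ENNReal.ofReal_lt_iff_lt_toReal hu0.le hxmeas).mpr huG
    rw [hsup] at hlt
    obtain ⟨n, hn⟩ := lt_iSup_iff.mp hlt
    set y := x - ((n:ℝ) + 1)⁻¹ with hy
    have hylt : y < x := by
      have : (0:ℝ) < ((n:ℝ) + 1)⁻¹ := by positivity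
      simp only [hy]; linarith
    have huy : u ≤ cdf μ y := by
      rw [cdf_eq_real, measureReal_def]
      exact ((ENNReal.ofReal_lt_iff_lt_toReal hu0.le (measure_ne_top _ _)).mp hn).le
    have hucdfx : u ≤ cdf μ x := le_trans huy (monotone_cdf μ hylt.le)
    refine ⟨?_, hu0, le_of_lt (lt_of_le_of_lt hucdfx hFlt)⟩
    have hu1 : u < 1 := lt_trans (lt_of_le_of_lt hucdfx hFlt) hα.2
    exact (rQ_lt_iff hu0 hu1).mpr ⟨y, hylt, huy⟩
  have hsub2 : {u : ℝ | rQ μ u < x} ∩ Ioc 0 α ⊆ Ioc 0 ((μ (Iio x)).toReal) := by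
    rintro u ⟨hQu, hu0, huα⟩
    refine ⟨hu0, ?_⟩
    obtain ⟨y, hyx, hy⟩ := (rQ_lt_iff hu0 (lt_of_le_of_lt huα hα.2)).mp hQu
    rw [cdf_eq_real, measureReal_def] at hy
    exact le_trans hy (ENNReal.toReal_mono hxmeas (measure_mono (Iic_subset_Iio.mpr hyx)))
  have h1 := measure_mono (μ := volume) hsub1
  have h2 := measure_mono (μ := volume) hsub2
  rw [Real.volume_Ioo, sub_zero, ENNReal.ofReal_toReal hxmeas] at h1
  rw [Real.volume_Ioc, sub_zero, ENNReal.ofReal_toReal hxmeas] at h2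
  exact le_antisymm h2 h1

end Lemmas

theorem key (μ : Measure ℝ) [IsProbabilityMeasure μ] {α : ℝ} (hα : α ∈ Set.Ioo (0:ℝ) 1)
    (hint : Integrable (fun x => max (-x) 0) μ) :
    ∫ u in Ioc (0:ℝ) α, rQ μ u
      = (∫ x in Iic (rQ μ α), x ∂μ) + rQ μ α * (α - (μ (Iic (rQ μ α))).toReal) := by
  set c := rQ μ α with hc
  -- monotonicity on Ioc 0 α
  have hQmono : MonotoneOn (rQ μ) (Ioc 0 α) := fun u hu v hv huv =>
    rQ_mono hu.1 huv (lt_of_le_of_lt hv.2 hα.2)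
  have hQae : AEMeasurable (rQ μ) (volume.restrict (Ioc 0 α)) :=
    aemeasurable_restrict_of_monotoneOn measurableSet_Ioc hQmono
  have hfae : AEMeasurable (fun u => c - rQ μ u) (volume.restrict (Ioc 0 α)) :=
    aemeasurable_const.sub hQae
  have hnn : 0 ≤ᵐ[volume.restrict (Ioc 0 α)] fun u => c - rQ μ u := by
    rw [EventuallyLE, ae_restrict_iff' measurableSet_Ioc]
    refine Eventually.of_forall fun u hu => ?_
    have := rQ_mono (μ := μ) hu.1 hu.2 hα.2
    simpa [sub_nonneg] using this
  -- layer cake on both sides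
  have hL1 := lintegral_eq_lintegral_meas_lt (volume.restrict (Ioc 0 α)) hnn hfae
  have hmax_meas : Measurable fun x : ℝ => max (c - x) 0 :=
    (measurable_const.sub measurable_id).max measurable_const
  have hL2 := lintegral_eq_lintegral_meas_lt μ
    (Eventually.of_forall fun x : ℝ => le_max_right (c - x) 0) hmax_meas.aemeasurable
  have hpt : ∀ t ∈ Ioi (0:ℝ),
      (volume.restrict (Ioc 0 α)) {u : ℝ | t < c - rQ μ u} = μ {x : ℝ | t < max (c - x) 0} := by
    intro t ht
    have ht' : (0:ℝ) < t := ht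
    rw [Measure.restrict_apply' measurableSet_Ioc]
    have h1 : {u : ℝ | t < c - rQ μ u} = {u : ℝ | rQ μ u < c - t} := by
      ext u; simp only [mem_setOf_eq]; constructor <;> intro h <;> linarith
    have h2 : {x : ℝ | t < max (c - x) 0} = Iio (c - t) := by
      ext x
      simp only [mem_setOf_eq, lt_max_iff, mem_Iio]
      constructor
      · rintro (h | h) <;> linarith
      · intro h; left; linarith
    rw [h1, h2, measure_rQ_lt hα (by linarith)]
  have hEq : ∫⁻ u in Ioc (0:ℝ) α, ENNReal.ofReal (c - rQ μ u)
      = ∫⁻ x, ENNReal.ofReal (max (c - x) 0) ∂μ := by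
    rw [hL1, hL2]
    exact setLIntegral_congr_fun_ae measurableSet_Ioi (Eventually.of_forall hpt)
  -- integrability of max (c - x) 0 wrt μ
  have hcint : Integrable (fun x : ℝ => max (c - x) 0) μ := by
    refine Integrable.mono' ((integrable_const |c|).add hint)
      hmax_meas.aestronglyMeasurable (Eventually.of_forall fun x => ?_)
    simp only [Pi.add_apply]
    rw [Real.norm_eq_abs, abs_of_nonneg (le_max_right _ _)]
    rcases le_total (c - x) 0 with h | h
    · rw [max_eq_right h]
      exact add_nonneg (abs_nonneg c) (le_max_right _ _)
    · rw [max_eq_left h]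
      have h1 : c ≤ |c| := le_abs_self c
      have h2 : -x ≤ max (-x) 0 := le_max_left _ _
      linarith
  have hcnn : 0 ≤ᵐ[μ] fun x : ℝ => max (c - x) 0 :=
    Eventually.of_forall fun x => le_max_right _ _
  -- finiteness of the lintegral
  have hfin : ∫⁻ u in Ioc (0:ℝ) α, ENNReal.ofReal (c - rQ μ u) ≠ ⊤ := by
    rw [hEq, ← ofReal_integral_eq_lintegral_ofReal hcint hcnn]
    exact ENNReal.ofReal_ne_top
  -- integrability of c - rQ on Ioc 0 α
  have hintQ' : Integrable (fun u => c - rQ μ u) (volume.restrict (Ioc 0 α)) := by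
    refine ⟨hfae.aestronglyMeasurable, ?_⟩
    rw [hasFiniteIntegral_iff_ofReal hnn]
    exact lt_top_iff_ne_top.mpr hfin
  have hintQ : IntegrableOn (rQ μ) (Ioc 0 α) := by
    have heq : rQ μ = fun u => c - (c - rQ μ u) := by funext u; ring
    rw [heq]
    exact (integrable_const c).sub hintQ'
  -- convert lintegral equality into integral equality
  have hre : ∫ u in Ioc (0:ℝ) α, (c - rQ μ u) = ∫ x, max (c - x) 0 ∂μ := by
    rw [integral_eq_lintegral_of_nonneg_ae hnn hfae.aestronglyMeasurable,
      integral_eq_lintegral_of_nonneg_ae hcnn hmax_meas.aestronglyMeasurable, hEq]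
  -- compute LHS of hre
  have hvol : ((volume.restrict (Ioc (0:ℝ) α)) univ).toReal = α := by
    rw [Measure.restrict_apply_univ, Real.volume_Ioc, sub_zero, ENNReal.toReal_ofReal hα.1.le]
  have hlhs : ∫ u in Ioc (0:ℝ) α, (c - rQ μ u) = α * c - ∫ u in Ioc (0:ℝ) α, rQ μ u := by
    rw [integral_sub (integrable_const c) hintQ, integral_const, smul_eq_mul, measureReal_def, hvol]
  -- compute RHS of hre
  have hind : (fun x : ℝ => max (c - x) 0) = Set.indicator (Iic c) (fun x => c - x) := by
    funext x
    rcases le_or_gt x c with h | h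
    · rw [Set.indicator_of_mem (mem_Iic.mpr h), max_eq_left (by linarith)]
    · rw [Set.indicator_of_notMem (by simpa using h), max_eq_right (by linarith)]
  have hion : IntegrableOn (fun x : ℝ => c - x) (Iic c) μ :=
    (integrable_indicator_iff measurableSet_Iic).mp (hind ▸ hcint)
  have hionc : IntegrableOn (fun _ : ℝ => c) (Iic c) μ :=
    integrableOn_const (measure_ne_top μ _)
  have hid : IntegrableOn (fun x : ℝ => x) (Iic c) μ := by
    have heq2 : (fun x : ℝ => x) = fun x => c - (c - x) := by funext x; ring
    rw [heq2]
    exact hionc.sub hion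
  have hrhs : ∫ x, max (c - x) 0 ∂μ = c * (μ (Iic c)).toReal - ∫ x in Iic c, x ∂μ := by
    rw [hind, integral_indicator measurableSet_Iic]
    have : ∫ x in Iic c, (c - x) ∂μ = (∫ _ in Iic c, c ∂μ) - ∫ x in Iic c, x ∂μ :=
      integral_sub hionc hid
    rw [this, setIntegral_const, smul_eq_mul, measureReal_def]
    ring
  have := hre
  rw [hlhs, hrhs] at this
  linarith

end TailMeanAux
end AuxQuantile

/-- Integral representation of tail mean and Expected Shortfall. -/
theorem tailMean_eq_integral_quantile (P : Measure Ω) [IsProbabilityMeasure P] (α : ℝ)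
    (hα : α ∈ Set.Ioo (0:ℝ) 1)
    (X : Ω → ℝ) (hX : Measurable X)
    (hXint : Integrable (fun ω => max (-(X ω)) 0) P) :
    tailMean P X α = α⁻¹ * ∫ u in (0:ℝ)..α, lowerQuantile P X u ∧
    ES P X α = - (α⁻¹ * ∫ u in (0:ℝ)..α, lowerQuantile P X u) := by
  set μ := P.map X with hμ
  haveI : IsProbabilityMeasure μ := Measure.isProbabilityMeasure_map hX.aemeasurable
  have hmap : ∀ x : ℝ, P {ω | X ω ≤ x} = μ (Set.Iic x) := fun x =>
    (Measure.map_apply hX measurableSet_Iic).symm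
  have hq : ∀ u : ℝ, lowerQuantile P X u = TailMeanAux.rQ μ u := by
    intro u
    rw [lowerQuantile]
    simp_rw [hmap]
    exact TailMeanAux.rQ_eq u
  have hint : Integrable (fun x : ℝ => max (-x) 0) μ :=
    (integrable_map_measure
      (Continuous.aestronglyMeasurable (by continuity)) hX.aemeasurable).mpr hXint
  have hsi : ∫ x in Set.Iic (TailMeanAux.rQ μ α), x ∂μ
      = ∫ ω in {ω | X ω ≤ TailMeanAux.rQ μ α}, X ω ∂P := by
    rw [hμ]
    exact setIntegral_map (f := fun y : ℝ => y) measurableSet_Iic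
      aestronglyMeasurable_id hX.aemeasurable
  have main : tailMean P X α = α⁻¹ * ∫ u in (0:ℝ)..α, lowerQuantile P X u := by
    rw [tailMean, intervalIntegral.integral_of_le hα.1.le]
    simp_rw [hq]
    rw [TailMeanAux.key μ hα hint, hsi, hmap]
  exact ⟨main, by rw [ES, main]⟩


end
end

section
/- If X is a real-valued random variable on a probability space (Ω,𝒜,P) with E[X⁻] < ∞, then the mappings α ↦ TM_α(X) and α ↦ ES_α(X) are continuous on the open interval (0,1). -/
open MeasureTheory ProbabilityTheory Filter
open scoped Classical

noncomputable section

variable {Ω : Type*} [MeasurableSpace Ω]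

open scoped ENNReal

section AuxContinuity

variable (P : Measure Ω) [IsProbabilityMeasure P] (X : Ω → ℝ)

lemma aux_nonempty {α : ℝ} (hα : α < 1) :
    {x : ℝ | α ≤ (P {ω | X ω ≤ x}).toReal}.Nonempty := by
  have hU : (⋃ n : ℕ, {ω | X ω ≤ (n : ℝ)}) = Set.univ := by
    ext ω; simp only [Set.mem_iUnion, Set.mem_univ, iff_true, Set.mem_setOf_eq]
    exact exists_nat_ge (X ω)
  have hmono : Monotone fun n : ℕ => {ω | X ω ≤ (n : ℝ)} := by
    intro n m hnm ω (hω : X ω ≤ n)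
    exact le_trans hω (by exact_mod_cast Nat.cast_le.mpr hnm)
  have htend : Tendsto (fun n : ℕ => P {ω | X ω ≤ (n : ℝ)}) atTop (nhds (P Set.univ)) := by
    have := tendsto_measure_iUnion_atTop (μ := P) hmono
    rwa [hU] at this
  rw [measure_univ] at htend
  have hlt : ENNReal.ofReal α < 1 := by
    rcases le_or_gt α 0 with h | h
    · simpa [ENNReal.ofReal_eq_zero.mpr h] using ENNReal.zero_lt_one
    · exact lt_of_lt_of_le (ENNReal.ofReal_lt_ofReal_iff_of_nonneg h.le |>.mpr hα) (by simp)
  obtain ⟨n, hn⟩ := (htend.eventually (eventually_gt_nhds hlt)).exists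
  exact ⟨n, (ENNReal.ofReal_le_iff_le_toReal (measure_ne_top P _)).mp hn.le⟩

lemma aux_bddBelow (hX : Measurable X) {α : ℝ} (hα : 0 < α) :
    BddBelow {x : ℝ | α ≤ (P {ω | X ω ≤ x}).toReal} := by
  have hI : (⋂ n : ℕ, {ω | X ω ≤ -(n : ℝ)}) = ∅ := by
    ext ω
    simp only [Set.mem_iInter, Set.mem_empty_iff_false, iff_false, not_forall,
      Set.mem_setOf_eq, not_le]
    obtain ⟨n, hn⟩ := exists_nat_gt (-(X ω))
    exact ⟨n, by linarith⟩
  have hanti : Antitone fun n : ℕ => {ω | X ω ≤ -(n : ℝ)} := by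
    intro n m hnm ω (hω : X ω ≤ -(m : ℝ))
    refine le_trans hω ?_
    simp only [neg_le_neg_iff]
    exact_mod_cast hnm
  have htend : Tendsto (fun n : ℕ => P {ω | X ω ≤ -(n : ℝ)}) atTop (nhds 0) := by
    have := tendsto_measure_iInter_atTop (μ := P) (s := fun n : ℕ => {ω | X ω ≤ -(n : ℝ)})
      (hs := fun n => (hX measurableSet_Iic).nullMeasurableSet) (hm := hanti)
      (hf := ⟨0, measure_ne_top P _⟩)
    rwa [hI, measure_empty] at this
  have hpos : (0 : ℝ≥0∞) < ENNReal.ofReal α := ENNReal.ofReal_pos.mpr hα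
  obtain ⟨n, hn⟩ := (htend.eventually (eventually_lt_nhds hpos)).exists
  refine ⟨-(n : ℝ), fun x hx => ?_⟩
  by_contra hlt
  push_neg at hlt
  have h1 : P {ω | X ω ≤ x} ≤ P {ω | X ω ≤ -(n : ℝ)} :=
    measure_mono fun ω (hω : X ω ≤ x) => le_trans hω hlt.le
  have h2 : P {ω | X ω ≤ x} < ENNReal.ofReal α := lt_of_le_of_lt h1 hn
  exact absurd ((ENNReal.ofReal_le_iff_le_toReal (measure_ne_top P _)).mpr hx)
    (not_le.mpr h2)

lemma aux_ge (hX : Measurable X) {α : ℝ} (hα : α ∈ Set.Ioo (0:ℝ) 1) :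
    α ≤ (P {ω | X ω ≤ lowerQuantile P X α}).toReal := by
  have hne := aux_nonempty P X hα.2
  have hbdd := aux_bddBelow P X hX hα.1
  have hq : lowerQuantile P X α = sInf {x : ℝ | α ≤ (P {ω | X ω ≤ x}).toReal} := rfl
  set q := lowerQuantile P X α with hqdef
  have hstep : ∀ n : ℕ, ENNReal.ofReal α ≤ P {ω | X ω ≤ q + 1/(n+1 : ℝ)} := by
    intro n
    have hpos : (0:ℝ) < 1/(n+1 : ℝ) := by positivity
    have hlt : sInf {x : ℝ | α ≤ (P {ω | X ω ≤ x}).toReal} < q + 1/(n+1:ℝ) := by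
      rw [← hq]; linarith
    obtain ⟨x, hx, hxlt⟩ := (csInf_lt_iff hbdd hne).mp hlt
    refine le_trans ((ENNReal.ofReal_le_iff_le_toReal (measure_ne_top P _)).mpr hx) ?_
    exact measure_mono fun ω (hω : X ω ≤ x) => le_trans hω hxlt.le
  have hI : {ω | X ω ≤ q} = ⋂ n : ℕ, {ω | X ω ≤ q + 1/(n+1 : ℝ)} := by
    ext ω
    simp only [Set.mem_iInter, Set.mem_setOf_eq]
    constructor
    · intro h n
      have hpos : (0:ℝ) < 1/(n+1:ℝ) := by positivity
      linarith
    · intro h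
      by_contra hlt
      push_neg at hlt
      obtain ⟨n, hn⟩ := exists_nat_one_div_lt (by linarith : (0:ℝ) < X ω - q)
      have h2 := h n
      linarith
  have hanti : Antitone fun n : ℕ => {ω | X ω ≤ q + 1/(n+1 : ℝ)} := by
    intro n m hnm ω (hω : X ω ≤ q + 1/(m+1:ℝ))
    refine le_trans hω (add_le_add le_rfl ?_)
    apply one_div_le_one_div_of_le (by positivity)
    have : (n:ℝ) ≤ m := by exact_mod_cast hnm
    linarith
  have hmeas := Antitone.measure_iInter (μ := P) (s := fun n : ℕ => {ω | X ω ≤ q + 1/(n+1:ℝ)})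
    hanti (fun n => (hX measurableSet_Iic).nullMeasurableSet) ⟨0, measure_ne_top P _⟩
  rw [← hI] at hmeas
  have : ENNReal.ofReal α ≤ P {ω | X ω ≤ q} := by
    rw [hmeas]; exact le_iInf hstep
  exact (ENNReal.ofReal_le_iff_le_toReal (measure_ne_top P _)).mp this

lemma aux_le (hX : Measurable X) {α : ℝ} (hα : α ∈ Set.Ioo (0:ℝ) 1) :
    (P {ω | X ω < lowerQuantile P X α}).toReal ≤ α := by
  have hbdd := aux_bddBelow P X hX hα.1
  have hq : lowerQuantile P X α = sInf {x : ℝ | α ≤ (P {ω | X ω ≤ x}).toReal} := rfl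
  set q := lowerQuantile P X α with hqdef
  have hstep : ∀ n : ℕ, P {ω | X ω ≤ q - 1/(n+1 : ℝ)} ≤ ENNReal.ofReal α := by
    intro n
    have hpos : (0:ℝ) < 1/(n+1 : ℝ) := by positivity
    have hnot : q - 1/(n+1:ℝ) ∉ {x : ℝ | α ≤ (P {ω | X ω ≤ x}).toReal} := by
      intro hmem
      have h2 := csInf_le hbdd hmem
      rw [← hq] at h2
      linarith
    simp only [Set.mem_setOf_eq, not_le] at hnot
    exact (ENNReal.le_ofReal_iff_toReal_le (measure_ne_top P _) hα.1.le).mpr hnot.le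
  have hU : {ω | X ω < q} = ⋃ n : ℕ, {ω | X ω ≤ q - 1/(n+1 : ℝ)} := by
    ext ω
    simp only [Set.mem_iUnion, Set.mem_setOf_eq]
    constructor
    · intro h
      obtain ⟨n, hn⟩ := exists_nat_one_div_lt (by linarith : (0:ℝ) < q - X ω)
      exact ⟨n, by linarith⟩
    · rintro ⟨n, hn⟩
      have hpos : (0:ℝ) < 1/(n+1:ℝ) := by positivity
      linarith
  have hmono : Monotone fun n : ℕ => {ω | X ω ≤ q - 1/(n+1 : ℝ)} := by
    intro n m hnm ω (hω : X ω ≤ q - 1/(n+1:ℝ))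
    refine le_trans hω (sub_le_sub_left ?_ q)
    apply one_div_le_one_div_of_le (by positivity)
    have : (n:ℝ) ≤ m := by exact_mod_cast hnm
    linarith
  have hmeas := Monotone.measure_iUnion (μ := P)
    (s := fun n : ℕ => {ω | X ω ≤ q - 1/(n+1:ℝ)}) hmono
  rw [← hU] at hmeas
  refine ENNReal.toReal_le_of_le_ofReal hα.1.le ?_
  rw [hmeas]
  exact iSup_le hstep

/-- The function whose sup representation gives convexity. -/
def Gfun (P : Measure Ω) (X : Ω → ℝ) (α : ℝ) : ℝ :=
  (∫ ω, min (X ω - lowerQuantile P X α) 0 ∂P) + lowerQuantile P X α * α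

lemma int_min (hX : Measurable X) (hXint : Integrable (fun ω => max (-(X ω)) 0) P)
    (s : ℝ) : Integrable (fun ω => min (X ω - s) 0) P := by
  refine Integrable.mono' (hXint.add (integrable_const |s|))
    ((hX.sub_const s).min measurable_const).aestronglyMeasurable ?_
  filter_upwards with ω
  rw [Real.norm_eq_abs, Pi.add_apply]
  rcases le_total (X ω - s) 0 with h | h
  · rw [min_eq_left h, abs_of_nonpos h]
    have h1 := le_max_left (-(X ω)) 0
    have h2 := le_abs_self s
    linarith
  · rw [min_eq_right h, abs_zero]
    have h1 := le_max_right (-(X ω)) 0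
    have h2 := abs_nonneg s
    linarith

lemma tailMean_eq (hX : Measurable X) (hXint : Integrable (fun ω => max (-(X ω)) 0) P)
    (α : ℝ) : tailMean P X α = α⁻¹ * Gfun P X α := by
  set q := lowerQuantile P X α with hq
  have hA : MeasurableSet {ω | X ω ≤ q} := hX measurableSet_Iic
  have hind : ∀ ω, Set.indicator {ω | X ω ≤ q} (fun ω => X ω - q) ω = min (X ω - q) 0 := by
    intro ω
    rcases le_total (X ω) q with h | h
    · rw [Set.indicator_of_mem (show ω ∈ {ω | X ω ≤ q} from h), min_eq_left (by linarith)]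
    · rcases eq_or_lt_of_le h with h' | h'
      · simp [Set.indicator, Set.mem_setOf_eq, ← h']
      · rw [Set.indicator_of_notMem (by simpa using h'), min_eq_right (by linarith)]
  have hIO : IntegrableOn (fun ω => X ω - q) {ω | X ω ≤ q} P := by
    have h0 := (int_min P X hX hXint q).congr
      (Filter.Eventually.of_forall fun ω => (hind ω).symm)
    rwa [integrable_indicator_iff hA] at h0
  have h1 : ∫ ω in {ω | X ω ≤ q}, (X ω - q) ∂P = ∫ ω, min (X ω - q) 0 ∂P := by
    rw [← integral_indicator hA]
    exact integral_congr_ae (Filter.Eventually.of_forall hind)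
  have h2 : ∫ ω in {ω | X ω ≤ q}, X ω ∂P
      = (∫ ω, min (X ω - q) 0 ∂P) + q * (P {ω | X ω ≤ q}).toReal := by
    have : ∫ ω in {ω | X ω ≤ q}, X ω ∂P
        = ∫ ω in {ω | X ω ≤ q}, ((X ω - q) + q) ∂P := by
      congr 1; ext ω; ring
    rw [this, integral_add hIO ((integrable_const q).integrableOn),
      h1, integral_const, measureReal_def, Measure.restrict_apply_univ, smul_eq_mul]
    ring
  unfold tailMean Gfun
  rw [← hq, h2]
  ring

lemma Gfun_ge (hX : Measurable X) (hXint : Integrable (fun ω => max (-(X ω)) 0) P)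
    {α : ℝ} (hα : α ∈ Set.Ioo (0:ℝ) 1) (s : ℝ) :
    (∫ ω, min (X ω - s) 0 ∂P) + s * α ≤ Gfun P X α := by
  set q := lowerQuantile P X α with hq
  rcases le_total s q with hsq | hsq
  · -- use indicator of {X < q}
    have hB : MeasurableSet {ω | X ω < q} := hX measurableSet_Iio
    have hpt : ∀ ω, min (X ω - s) 0
        ≤ min (X ω - q) 0 + Set.indicator {ω | X ω < q} (fun _ => q - s) ω := by
      intro ω
      rcases lt_or_ge (X ω) q with h | h
      · rw [Set.indicator_of_mem (show ω ∈ {ω | X ω < q} from h)]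
        have : min (X ω - s) 0 ≤ X ω - s := min_le_left _ _
        have h2 : min (X ω - q) 0 = X ω - q := min_eq_left (by linarith)
        linarith
      · rw [Set.indicator_of_notMem (by simpa using h), add_zero,
          min_eq_right (by linarith : (0:ℝ) ≤ X ω - s), min_eq_right (by linarith : (0:ℝ) ≤ X ω - q)]
    have hint : ∫ ω, (min (X ω - q) 0 + Set.indicator {ω | X ω < q} (fun _ => q - s) ω) ∂P
        = (∫ ω, min (X ω - q) 0 ∂P) + (P {ω | X ω < q}).toReal * (q - s) := by
      rw [integral_add (int_min P X hX hXint q) ((integrable_const (q - s)).indicator hB),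
        integral_indicator_const _ hB, smul_eq_mul, measureReal_def]
    have hmono := integral_mono (int_min P X hX hXint s)
      ((int_min P X hX hXint q).add ((integrable_const (q - s)).indicator hB)) hpt
    simp only [Pi.add_apply] at hmono
    rw [hint] at hmono
    have hPle : (P {ω | X ω < q}).toReal ≤ α := aux_le P X hX hα
    have h3 : (P {ω | X ω < q}).toReal * (q - s) ≤ α * (q - s) :=
      mul_le_mul_of_nonneg_right hPle (by linarith)
    unfold Gfun
    rw [← hq]
    nlinarith
  · have hA : MeasurableSet {ω | X ω ≤ q} := hX measurableSet_Iic
    have hpt : ∀ ω, min (X ω - s) 0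
        ≤ min (X ω - q) 0 + Set.indicator {ω | X ω ≤ q} (fun _ => q - s) ω := by
      intro ω
      rcases le_or_gt (X ω) q with h | h
      · rw [Set.indicator_of_mem (show ω ∈ {ω | X ω ≤ q} from h)]
        have h2 : min (X ω - q) 0 = X ω - q := min_eq_left (by linarith)
        have h3 : min (X ω - s) 0 ≤ X ω - s := min_le_left _ _
        linarith
      · rw [Set.indicator_of_notMem (by simpa using h), add_zero]
        exact min_le_min (by linarith) le_rfl
    have hint : ∫ ω, (min (X ω - q) 0 + Set.indicator {ω | X ω ≤ q} (fun _ => q - s) ω) ∂P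
        = (∫ ω, min (X ω - q) 0 ∂P) + (P {ω | X ω ≤ q}).toReal * (q - s) := by
      rw [integral_add (int_min P X hX hXint q) ((integrable_const (q - s)).indicator hA),
        integral_indicator_const _ hA, smul_eq_mul, measureReal_def]
    have hmono := integral_mono (int_min P X hX hXint s)
      ((int_min P X hX hXint q).add ((integrable_const (q - s)).indicator hA)) hpt
    simp only [Pi.add_apply] at hmono
    rw [hint] at hmono
    have hPge : α ≤ (P {ω | X ω ≤ q}).toReal := aux_ge P X hX hα
    have h3 : (P {ω | X ω ≤ q}).toReal * (q - s) ≤ α * (q - s) :=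
      mul_le_mul_of_nonpos_right hPge (by linarith)
    unfold Gfun
    rw [← hq]
    nlinarith

lemma Gfun_convexOn (hX : Measurable X) (hXint : Integrable (fun ω => max (-(X ω)) 0) P) :
    ConvexOn ℝ (Set.Ioo (0:ℝ) 1) (Gfun P X) := by
  refine ⟨convex_Ioo 0 1, fun a ha b hb ta tb hta htb htab => ?_⟩
  set c := ta • a + tb • b with hc
  set qc := lowerQuantile P X c with hqc
  have hsplit : Gfun P X c = ta * ((∫ ω, min (X ω - qc) 0 ∂P) + qc * a)
      + tb * ((∫ ω, min (X ω - qc) 0 ∂P) + qc * b) := by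
    unfold Gfun
    rw [← hqc, hc]
    simp only [smul_eq_mul]
    linear_combination (-(∫ ω, min (X ω - qc) 0 ∂P)) * htab
  rw [hsplit]
  have h1 := Gfun_ge P X hX hXint ha qc
  have h2 := Gfun_ge P X hX hXint hb qc
  have := add_le_add (mul_le_mul_of_nonneg_left h1 hta) (mul_le_mul_of_nonneg_left h2 htb)
  simpa [smul_eq_mul] using this


end AuxContinuity

/-- Continuity of tail mean and Expected Shortfall in the level α. -/
theorem tailMean_continuousOn (P : Measure Ω) [IsProbabilityMeasure P]
    (X : Ω → ℝ) (hX : Measurable X)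
    (hXint : Integrable (fun ω => max (-(X ω)) 0) P) :
    ContinuousOn (fun α => tailMean P X α) (Set.Ioo (0:ℝ) 1) ∧
    ContinuousOn (fun α => ES P X α) (Set.Ioo (0:ℝ) 1) := by
  have hG : ContinuousOn (Gfun P X) (Set.Ioo (0:ℝ) 1) :=
    (Gfun_convexOn P X hX hXint).continuousOn isOpen_Ioo
  have hinv : ContinuousOn (fun α : ℝ => α⁻¹) (Set.Ioo (0:ℝ) 1) :=
    fun α hα => (continuousAt_inv₀ (ne_of_gt hα.1)).continuousWithinAt
  have h1 : ContinuousOn (fun α => tailMean P X α) (Set.Ioo (0:ℝ) 1) :=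
    (hinv.mul hG).congr fun α hα => tailMean_eq P X hX hXint α
  exact ⟨h1, h1.neg⟩

end
end

section
/- If X is a real-valued random variable on a probability space (Ω,𝒜,P) with E[X⁻] < ∞, then for any α ∈ (0,1) and any ε > 0 with α + ε < 1, one has TM_{α+ε}(X) ≥ TM_α(X), and equivalently ES_{α+ε}(X) ≤ ES_α(X); that is, Expected Shortfall is non-increasing in the confidence level. -/
open MeasureTheory ProbabilityTheory Filter
open scoped Classical

noncomputable section

variable {Ω : Type*} [MeasurableSpace Ω]

lemma cdf_mono (P : Measure Ω) [IsProbabilityMeasure P] (X : Ω → ℝ) {x y : ℝ} (h : x ≤ y) :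
    (P {ω | X ω ≤ x}).toReal ≤ (P {ω | X ω ≤ y}).toReal := by
  apply ENNReal.toReal_mono (measure_ne_top _ _)
  exact measure_mono (fun ω hω => le_trans hω h)

lemma cdf_large (P : Measure Ω) [IsProbabilityMeasure P] (X : Ω → ℝ) (hX : Measurable X)
    {β : ℝ} (hβ : β < 1) : ∃ x : ℝ, β ≤ (P {ω | X ω ≤ x}).toReal := by
  have hmono : Monotone (fun n : ℕ => {ω | X ω ≤ (n : ℝ)}) := by
    intro m n hmn ω hω
    simp only [Set.mem_setOf_eq] at hω ⊢
    exact le_trans hω (by exact_mod_cast hmn)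
  have hU : (⋃ n : ℕ, {ω | X ω ≤ (n : ℝ)}) = Set.univ := by
    ext ω
    simp only [Set.mem_iUnion, Set.mem_setOf_eq, Set.mem_univ, iff_true]
    exact ⟨⌈X ω⌉₊, Nat.le_ceil _⟩
  have h1 := tendsto_measure_iUnion_atTop (μ := P) hmono
  rw [hU, measure_univ] at h1
  have h2 : Tendsto (fun n : ℕ => (P {ω | X ω ≤ (n : ℝ)}).toReal) atTop (nhds 1) := by
    have := (ENNReal.tendsto_toReal (a := 1) (by norm_num)).comp h1
    simpa [Function.comp_def] using this
  obtain ⟨n, hn⟩ := (h2.eventually (eventually_ge_nhds hβ)).exists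
  exact ⟨n, hn⟩

lemma cdf_small (P : Measure Ω) [IsProbabilityMeasure P] (X : Ω → ℝ) (hX : Measurable X)
    {α : ℝ} (hα : 0 < α) : ∃ x : ℝ, (P {ω | X ω ≤ x}).toReal < α := by
  have hanti : Antitone (fun n : ℕ => {ω | X ω ≤ -(n : ℝ)}) := by
    intro m n hmn ω hω
    simp only [Set.mem_setOf_eq] at hω ⊢
    have : (m:ℝ) ≤ n := by exact_mod_cast hmn
    linarith
  have hI : (⋂ n : ℕ, {ω | X ω ≤ -(n : ℝ)}) = ∅ := by
    ext ω
    simp only [Set.mem_iInter, Set.mem_setOf_eq, Set.mem_empty_iff_false, iff_false, not_forall,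
      not_le]
    obtain ⟨n, hn⟩ := exists_nat_gt (-(X ω))
    exact ⟨n, by linarith⟩
  have h1 := tendsto_measure_iInter_atTop (μ := P) (s := fun n : ℕ => {ω | X ω ≤ -(n : ℝ)})
    (fun n => ((hX measurableSet_Iic).nullMeasurableSet)) hanti ⟨0, measure_ne_top _ _⟩
  rw [hI, measure_empty] at h1
  have h2 : Tendsto (fun n : ℕ => (P {ω | X ω ≤ -(n : ℝ)}).toReal) atTop (nhds 0) := by
    have := (ENNReal.tendsto_toReal (a := 0) (by norm_num)).comp h1
    simpa [Function.comp_def] using this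
  obtain ⟨n, hn⟩ := (h2.eventually (eventually_lt_nhds hα)).exists
  exact ⟨-(n : ℝ), hn⟩

lemma quantile_bddBelow (P : Measure Ω) [IsProbabilityMeasure P] (X : Ω → ℝ) (hX : Measurable X)
    {α : ℝ} (hα : 0 < α) : BddBelow {x : ℝ | α ≤ (P {ω | X ω ≤ x}).toReal} := by
  obtain ⟨x, hx⟩ := cdf_small P X hX hα
  refine ⟨x, fun y hy => ?_⟩
  by_contra h
  push_neg at h
  exact absurd (le_trans hy (cdf_mono P X h.le)) (not_le.mpr hx)

lemma quantile_mem (P : Measure Ω) [IsProbabilityMeasure P] (X : Ω → ℝ) (hX : Measurable X)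
    {β : ℝ} (hβ0 : 0 < β) (hβ1 : β < 1) :
    β ≤ (P {ω | X ω ≤ lowerQuantile P X β}).toReal := by
  set S := {x : ℝ | β ≤ (P {ω | X ω ≤ x}).toReal} with hS
  have hne : S.Nonempty := cdf_large P X hX hβ1
  have hbdd : BddBelow S := quantile_bddBelow P X hX hβ0
  set r := sInf S with hr
  have hmem : ∀ n : ℕ, β ≤ (P {ω | X ω ≤ r + 1/(n+1)}).toReal := by
    intro n
    have hpos : (0:ℝ) < 1/(n+1) := by positivity
    obtain ⟨s, hsS, hs⟩ := exists_lt_of_csInf_lt hne (show sInf S < r + 1/(n+1) by linarith)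
    exact le_trans hsS (cdf_mono P X hs.le)
  have hIeq : {ω | X ω ≤ r} = ⋂ n : ℕ, {ω | X ω ≤ r + 1/(n+1)} := by
    ext ω
    simp only [Set.mem_iInter, Set.mem_setOf_eq]
    constructor
    · intro h n
      have hp : (0:ℝ) < 1/(n+1) := by positivity
      linarith
    · intro h
      refine le_of_forall_pos_le_add fun ε hε => ?_
      obtain ⟨n, hn⟩ := exists_nat_one_div_lt hε
      exact le_trans (h n) (by push_cast; linarith)
  have hanti : Antitone (fun n : ℕ => {ω | X ω ≤ r + 1/(n+1)}) := by
    intro m n hmn ω hω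
    simp only [Set.mem_setOf_eq] at hω ⊢
    have h2 : (1:ℝ)/(n+1) ≤ 1/(m+1) := by
      apply one_div_le_one_div_of_le (by positivity)
      have : (m:ℝ) ≤ n := by exact_mod_cast hmn
      linarith
    linarith
  have h1 := tendsto_measure_iInter_atTop (μ := P) (s := fun n : ℕ => {ω | X ω ≤ r + 1/(n+1)})
    (fun n => ((hX measurableSet_Iic).nullMeasurableSet)) hanti ⟨0, measure_ne_top _ _⟩
  rw [← hIeq] at h1
  have h2 : Tendsto (fun n : ℕ => (P {ω | X ω ≤ r + 1/(n+1)}).toReal) atTop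
      (nhds (P {ω | X ω ≤ r}).toReal) := by
    have := (ENNReal.tendsto_toReal (measure_ne_top P _)).comp h1
    simpa [Function.comp_def] using this
  exact ge_of_tendsto' h2 hmem

lemma quantile_lt (P : Measure Ω) [IsProbabilityMeasure P] (X : Ω → ℝ) (hX : Measurable X)
    {β : ℝ} (hβ0 : 0 < β) (hβ1 : β < 1) :
    (P {ω | X ω < lowerQuantile P X β}).toReal ≤ β := by
  set S := {x : ℝ | β ≤ (P {ω | X ω ≤ x}).toReal} with hS
  have hbdd : BddBelow S := quantile_bddBelow P X hX hβ0
  set r := sInf S with hr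
  have hmem : ∀ n : ℕ, (P {ω | X ω ≤ r - 1/(n+1)}).toReal ≤ β := by
    intro n
    by_contra h
    push_neg at h
    have hin : r - 1/(n+1) ∈ S := le_of_lt h
    have := csInf_le hbdd hin
    have hpos : (0:ℝ) < 1/(n+1) := by positivity
    rw [← hr] at this
    linarith
  have hUeq : {ω | X ω < r} = ⋃ n : ℕ, {ω | X ω ≤ r - 1/(n+1)} := by
    ext ω
    simp only [Set.mem_iUnion, Set.mem_setOf_eq]
    constructor
    · intro h
      obtain ⟨n, hn⟩ := exists_nat_one_div_lt (show (0:ℝ) < r - X ω by linarith)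
      exact ⟨n, by push_cast at hn ⊢; linarith⟩
    · rintro ⟨n, hn⟩
      have : (0:ℝ) < 1/(n+1) := by positivity
      linarith
  have hmono : Monotone (fun n : ℕ => {ω | X ω ≤ r - 1/(n+1)}) := by
    intro m n hmn ω hω
    simp only [Set.mem_setOf_eq] at hω ⊢
    have h2 : (1:ℝ)/(n+1) ≤ 1/(m+1) := by
      apply one_div_le_one_div_of_le (by positivity)
      have : (m:ℝ) ≤ n := by exact_mod_cast hmn
      linarith
    linarith
  have h1 := tendsto_measure_iUnion_atTop (μ := P) hmono
  rw [← hUeq] at h1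
  have h2 : Tendsto (fun n : ℕ => (P {ω | X ω ≤ r - 1/(n+1)}).toReal) atTop
      (nhds (P {ω | X ω < r}).toReal) := by
    have := (ENNReal.tendsto_toReal (measure_ne_top P _)).comp h1
    simpa [Function.comp_def] using this
  exact le_of_tendsto' h2 hmem

lemma quantile_mono (P : Measure Ω) [IsProbabilityMeasure P] (X : Ω → ℝ) (hX : Measurable X)
    {α β : ℝ} (hα : 0 < α) (hβ1 : β < 1) (hαβ : α ≤ β) :
    lowerQuantile P X α ≤ lowerQuantile P X β := by
  refine csInf_le_csInf (quantile_bddBelow P X hX hα) (cdf_large P X hX hβ1)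
    (fun x hx => le_trans hαβ hx)

lemma integrableOn_tail (P : Measure Ω) [IsProbabilityMeasure P] (X : Ω → ℝ) (hX : Measurable X)
    (hXint : Integrable (fun ω => max (-(X ω)) 0) P) (c : ℝ) :
    IntegrableOn X {ω | X ω ≤ c} P := by
  have hs : MeasurableSet {ω | X ω ≤ c} := hX measurableSet_Iic
  refine Integrable.mono' ((hXint.add (integrable_const |c|)).restrict) 
    (hX.aestronglyMeasurable.restrict) ?_
  rw [ae_restrict_iff' hs]
  refine Eventually.of_forall fun ω hω => ?_
  simp only [Set.mem_setOf_eq] at hω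
  have key : |X ω| ≤ max (-(X ω)) 0 + |c| := by
    rcases le_or_gt (X ω) 0 with h | h
    · rw [abs_of_nonpos h]
      have h1 := le_max_left (-(X ω)) (0:ℝ)
      have h2 := abs_nonneg c
      linarith
    · rw [abs_of_pos h]
      have h1 : X ω ≤ |c| := le_trans hω (le_abs_self c)
      have h2 : (0:ℝ) ≤ max (-(X ω)) 0 := le_max_right _ _
      linarith
  simpa [Real.norm_eq_abs] using key


set_option maxHeartbeats 1000000 in
/-- Monotonicity of tail mean and Expected Shortfall in the level. -/
theorem es_monotone (P : Measure Ω) [IsProbabilityMeasure P]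
    (X : Ω → ℝ) (hX : Measurable X)
    (hXint : Integrable (fun ω => max (-(X ω)) 0) P)
    (α ε : ℝ) (hα : α ∈ Set.Ioo (0:ℝ) 1) (hε : 0 < ε) (hαε : α + ε < 1) :
    tailMean P X α ≤ tailMean P X (α + ε) ∧ ES P X (α + ε) ≤ ES P X α := by
  obtain ⟨hα0, hα1⟩ := hα
  have main : tailMean P X α ≤ tailMean P X (α + ε) := by
    simp only [tailMean]
    have hβ0 : 0 < α + ε := by linarith
    have hβ1 : α + ε < 1 := hαε
    set β := α + ε with hβdef
    set q := lowerQuantile P X α with hqdef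
    set r := lowerQuantile P X β with hrdef
    have hqr : q ≤ r := quantile_mono P X hX hα0 hβ1 (by linarith)
    have hFq : α ≤ (P {ω | X ω ≤ q}).toReal := quantile_mem P X hX hα0 hα1
    have hFr : β ≤ (P {ω | X ω ≤ r}).toReal := quantile_mem P X hX hβ0 hβ1
    have hFr' : (P {ω | X ω < r}).toReal ≤ β := quantile_lt P X hX hβ0 hβ1
    have hmq : MeasurableSet {ω | X ω ≤ q} := hX measurableSet_Iic
    have hmr : MeasurableSet {ω | X ω ≤ r} := hX measurableSet_Iic
    set M := {ω | q < X ω ∧ X ω ≤ r} with hMdef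
    have hmM : MeasurableSet M := hX measurableSet_Ioc
    have hmAtom : MeasurableSet {ω | X ω = r} := hX (measurableSet_singleton r)
    have hunion : {ω | X ω ≤ r} = {ω | X ω ≤ q} ∪ M := by
      ext ω
      simp only [Set.mem_union, Set.mem_setOf_eq, hMdef]
      constructor
      · intro h
        rcases le_or_gt (X ω) q with h' | h'
        · exact Or.inl h'
        · exact Or.inr ⟨h', h⟩
      · rintro (h | ⟨_, h⟩)
        · exact le_trans h hqr
        · exact h
    have hdisj : Disjoint {ω | X ω ≤ q} M := by
      rw [Set.disjoint_left]
      rintro ω h1 ⟨h2, _⟩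
      simp only [Set.mem_setOf_eq] at h1
      linarith
    have hIq : IntegrableOn X {ω | X ω ≤ q} P := integrableOn_tail P X hX hXint q
    have hIr : IntegrableOn X {ω | X ω ≤ r} P := integrableOn_tail P X hX hXint r
    have hIM : IntegrableOn X M P := hIr.mono_set (by rw [hunion]; exact Set.subset_union_right)
    set A := ∫ ω in {ω | X ω ≤ q}, X ω ∂P with hAdef
    set B := ∫ ω in {ω | X ω ≤ r}, X ω ∂P with hBdef
    have hsplit : B = A + ∫ ω in M, X ω ∂P := by
      rw [hBdef, hunion]
      exact setIntegral_union hdisj hmM hIq hIM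
    have hPsplit : (P {ω | X ω ≤ r}).toReal = (P {ω | X ω ≤ q}).toReal + (P M).toReal := by
      rw [hunion, measure_union hdisj hmM,
        ENNReal.toReal_add (measure_ne_top _ _) (measure_ne_top _ _)]
    have hatomUnion : {ω | X ω ≤ r} = {ω | X ω < r} ∪ {ω | X ω = r} := by
      ext ω
      simp only [Set.mem_union, Set.mem_setOf_eq]
      constructor
      · intro h; exact lt_or_eq_of_le h
      · rintro (h | h)
        · exact le_of_lt h
        · exact le_of_eq h
    have hatomDisj : Disjoint {ω | X ω < r} {ω | X ω = r} := by
      rw [Set.disjoint_left]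
      intro ω h1 h2
      simp only [Set.mem_setOf_eq] at h1 h2
      rw [h2] at h1; exact lt_irrefl _ h1
    have hatom : (P {ω | X ω ≤ r}).toReal
        = (P {ω | X ω < r}).toReal + (P {ω | X ω = r}).toReal := by
      rw [hatomUnion, measure_union hatomDisj hmAtom,
        ENNReal.toReal_add (measure_ne_top _ _) (measure_ne_top _ _)]
    -- A ≤ q * F q
    have hA : A ≤ q * (P {ω | X ω ≤ q}).toReal := by
      have hq_int : IntegrableOn (fun _ : Ω => q) {ω | X ω ≤ q} P :=
        integrableOn_const (measure_ne_top P _)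
      have := setIntegral_mono_on hIq hq_int hmq (fun ω hω => hω)
      rw [setIntegral_const, measureReal_def] at this
      simpa [smul_eq_mul, mul_comm] using this
    -- integrability of X - q on M
    have hM_const : IntegrableOn (fun _ : Ω => q) M P :=
      integrableOn_const (measure_ne_top P _)
    have hintM : IntegrableOn (fun ω => X ω - q) M P := hIM.sub hM_const
    -- lower bound for ∫_M (X - q)
    have hIMlb : (r - q) * (P {ω | X ω = r}).toReal ≤ ∫ ω in M, (X ω - q) ∂P := by
      rcases eq_or_lt_of_le hqr with he | hlt
      · have hMempty : M = ∅ := by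
          ext ω
          simp only [hMdef, Set.mem_setOf_eq, Set.mem_empty_iff_false, iff_false, not_and, not_le]
          intro h
          rw [← he]
          exact h
        rw [hMempty]
        simp [← he]
      · have hsub : {ω | X ω = r} ⊆ M := by
          intro ω hω
          simp only [Set.mem_setOf_eq] at hω
          exact ⟨by rw [hω]; exact hlt, le_of_eq hω⟩
        have h1 : ∫ ω in {ω | X ω = r}, (X ω - q) ∂P = (P {ω | X ω = r}).toReal * (r - q) := by
          rw [setIntegral_congr_fun hmAtom
            (g := fun _ => r - q) (fun ω hω => by simp only [Set.mem_setOf_eq] at hω; simp [hω]),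
            setIntegral_const, smul_eq_mul, measureReal_def]
        have hnn : 0 ≤ᶠ[ae (P.restrict M)] fun ω => X ω - q := by
          filter_upwards [ae_restrict_mem hmM] with ω hω
          simp only [hMdef, Set.mem_setOf_eq] at hω
          simp only [Pi.zero_apply]
          linarith [hω.1]
        have h2 := setIntegral_mono_set hintM hnn (HasSubset.Subset.eventuallyLE hsub)
        rw [h1] at h2
        linarith
    have hatom2 : (P {ω | X ω ≤ r}).toReal - β ≤ (P {ω | X ω = r}).toReal := by
      linarith
    -- ∫_M X = ∫_M (X - q) + q * P M
    have hIMeq : ∫ ω in M, X ω ∂P = (∫ ω in M, (X ω - q) ∂P) + q * (P M).toReal := by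
      have h := integral_sub hIM hM_const
      rw [setIntegral_const, smul_eq_mul, measureReal_def] at h
      rw [h]
      ring
    -- abbreviations
    set Fq := (P {ω | X ω ≤ q}).toReal with hFqdef
    set Fr := (P {ω | X ω ≤ r}).toReal with hFrdef
    set Patom := (P {ω | X ω = r}).toReal with hPatomdef
    set PM := (P M).toReal with hPMdef
    set IM := ∫ ω in M, (X ω - q) ∂P with hIMdef2
    set A' := A + q * (α - Fq) with hA'def
    set B' := B + r * (β - Fr) with hB'def
    clear_value β q r M A B Fq Fr Patom PM IM A' B'
    have hA' : A' ≤ α * q := by rw [hA'def]; nlinarith [hA]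
    have hprod : (r - q) * (Fr - β) ≤ IM := by
      calc (r - q) * (Fr - β) ≤ (r - q) * Patom :=
            mul_le_mul_of_nonneg_left hatom2 (by linarith)
        _ ≤ IM := hIMlb
    have hB' : A' + ε * q ≤ B' := by
      rw [hA'def, hB'def, hsplit, hIMeq]
      have hPM : PM = Fr - Fq := by rw [hPMdef, hFrdef, hFqdef]; linarith [hPsplit]
      rw [hβdef] at hprod
      rw [hPM, hβdef]
      nlinarith [hprod]
    have hq_ub : 0 < α := hα0
    have hdiv : A' / α ≤ B' / β := by
      rw [hβdef]
      rw [div_le_div_iff₀ hα0 (by linarith : (0:ℝ) < α + ε)]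
      nlinarith [mul_le_mul_of_nonneg_left hA' hε.le, mul_le_mul_of_nonneg_left hB' hα0.le]
    rw [inv_mul_eq_div, inv_mul_eq_div]
    exact hdiv

  exact ⟨main, by simp only [ES]; exact neg_le_neg main⟩


end
end

section
/- Let X be a real-valued random variable on a probability space (Ω,𝒜,P) with E[X⁻] < ∞ and let α ∈ (0,1). Then the modified indicator function at the lower α-quantile satisfies: (i) 0 ≤ 1^{(α)}_{X ≤ x_{(α)}} ≤ 1 pointwise; (ii) E[1^{(α)}_{X ≤ x_{(α)}}] = α; (iii) α⁻¹ · E[X · 1^{(α)}_{X ≤ x_{(α)}}] = TM_α(X). -/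
open MeasureTheory ProbabilityTheory Filter
open scoped Classical

noncomputable section

variable {Ω : Type*} [MeasurableSpace Ω]

private lemma quantile_props' (P : Measure Ω) [IsProbabilityMeasure P] {α : ℝ} (hα : α ∈ Set.Ioo (0:ℝ) 1)
    {X : Ω → ℝ} (hX : Measurable X) :
    α ≤ (P {ω | X ω ≤ lowerQuantile P X α}).toReal ∧
    (P {ω | X ω < lowerQuantile P X α}).toReal ≤ α := by
  set S : Set ℝ := {x : ℝ | α ≤ (P {ω | X ω ≤ x}).toReal} with hS
  have hfin : ∀ x : ℝ, P {ω | X ω ≤ x} ≠ ⊤ := fun x => measure_ne_top P _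
  have hmeas : ∀ x : ℝ, MeasurableSet {ω | X ω ≤ x} := fun x =>
    measurableSet_le hX measurable_const
  have hmemS : ∀ x : ℝ, x ∈ S ↔ ENNReal.ofReal α ≤ P {ω | X ω ≤ x} := by
    intro x
    rw [hS, Set.mem_setOf_eq, ENNReal.ofReal_le_iff_le_toReal (hfin x)]
  have hmono : ∀ x y : ℝ, x ≤ y → P {ω | X ω ≤ x} ≤ P {ω | X ω ≤ y} := by
    intro x y hxy
    exact measure_mono (fun ω h => le_trans h hxy)
  -- nonempty
  have huniv : (⋃ n : ℕ, {ω | X ω ≤ (n:ℝ)}) = Set.univ := by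
    ext ω; simp only [Set.mem_iUnion, Set.mem_setOf_eq, Set.mem_univ, iff_true]
    obtain ⟨n, hn⟩ := exists_nat_ge (X ω); exact ⟨n, hn⟩
  have hne : S.Nonempty := by
    have h1 : P (⋃ n : ℕ, {ω | X ω ≤ (n:ℝ)}) = ⨆ n : ℕ, P {ω | X ω ≤ (n:ℝ)} := by
      refine Monotone.measure_iUnion (fun m n hmn ω h => ?_)
      simp only [Set.mem_setOf_eq] at h ⊢
      exact le_trans h (Nat.cast_le.mpr hmn)
    rw [huniv, measure_univ] at h1
    have hlt : ENNReal.ofReal α < ⨆ n : ℕ, P {ω | X ω ≤ (n:ℝ)} := by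
      rw [← h1]; exact ENNReal.ofReal_lt_one.mpr hα.2
    obtain ⟨n, hn⟩ := lt_iSup_iff.mp hlt
    exact ⟨n, (hmemS n).mpr hn.le⟩
  -- bdd below
  have hempty : (⋂ n : ℕ, {ω | X ω ≤ -(n:ℝ)}) = ∅ := by
    ext ω; simp only [Set.mem_iInter, Set.mem_setOf_eq, Set.mem_empty_iff_false, iff_false]
    push_neg
    obtain ⟨n, hn⟩ := exists_nat_gt (-(X ω)); exact ⟨n, by linarith⟩
  have hbdd : BddBelow S := by
    have h1 : P (⋂ n : ℕ, {ω | X ω ≤ -(n:ℝ)}) = ⨅ n : ℕ, P {ω | X ω ≤ -(n:ℝ)} := by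
      refine Antitone.measure_iInter (fun m n hmn => ?_)
        (fun n => (hmeas _).nullMeasurableSet) ⟨0, measure_ne_top P _⟩
      intro ω h
      simp only [Set.mem_setOf_eq] at h ⊢
      have := (Nat.cast_le (α := ℝ)).mpr hmn; linarith
    rw [hempty, measure_empty] at h1
    have hlt : ⨅ n : ℕ, P {ω | X ω ≤ -(n:ℝ)} < ENNReal.ofReal α := by
      rw [← h1]; simpa using ENNReal.ofReal_pos.mpr hα.1
    obtain ⟨n, hn⟩ := iInf_lt_iff.mp hlt
    refine ⟨-(n:ℝ), fun z hz => ?_⟩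
    by_contra h
    push_neg at h
    exact absurd (le_trans ((hmemS z).mp hz) (hmono _ _ h.le)) (not_le.mpr hn)
  set q := lowerQuantile P X α with hq
  constructor
  · -- α ≤ F q
    have hiInter : {ω | X ω ≤ q} = ⋂ n : ℕ, {ω | X ω ≤ q + 1/(n+1)} := by
      ext ω; simp only [Set.mem_iInter, Set.mem_setOf_eq]
      constructor
      · intro h n
        have : (0:ℝ) < 1/(n+1) := by positivity
        linarith
      · intro h
        by_contra hc
        push_neg at hc
        obtain ⟨n, hn⟩ := exists_nat_one_div_lt (show (0:ℝ) < X ω - q by linarith)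
        exact absurd (h n) (by push_neg; linarith)
    refine (hmemS q).mpr ?_
    rw [hiInter, Antitone.measure_iInter ?anti (fun n => (hmeas _).nullMeasurableSet)
      ⟨0, measure_ne_top P _⟩]
    case anti =>
      intro m n hmn ω h
      simp only [Set.mem_setOf_eq] at h ⊢
      have h1 : (1:ℝ)/(n+1) ≤ 1/(m+1) := by
        apply one_div_le_one_div_of_le (by positivity)
        have := (Nat.cast_le (α := ℝ)).mpr hmn; linarith
      linarith
    refine le_iInf (fun n => ?_)
    have hlt : q < q + 1/(n+1) := by
      have : (0:ℝ) < 1/(n+1) := by positivity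
      linarith
    obtain ⟨s, hsS, hs⟩ := (csInf_lt_iff hbdd hne).mp hlt
    exact le_trans ((hmemS s).mp hsS) (hmono _ _ hs.le)
  · -- P[X < q] ≤ α
    have hiUnion : {ω | X ω < q} = ⋃ n : ℕ, {ω | X ω ≤ q - 1/(n+1)} := by
      ext ω; simp only [Set.mem_iUnion, Set.mem_setOf_eq]
      constructor
      · intro h
        obtain ⟨n, hn⟩ := exists_nat_one_div_lt (show (0:ℝ) < q - X ω by linarith)
        exact ⟨n, by linarith⟩
      · rintro ⟨n, hn⟩
        have : (0:ℝ) < 1/(n+1) := by positivity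
        linarith
    have hle : P {ω | X ω < q} ≤ ENNReal.ofReal α := by
      rw [hiUnion, Monotone.measure_iUnion ?mono]
      case mono =>
        intro m n hmn ω h
        simp only [Set.mem_setOf_eq] at h ⊢
        have h1 : (1:ℝ)/(n+1) ≤ 1/(m+1) := by
          apply one_div_le_one_div_of_le (by positivity)
          have := (Nat.cast_le (α := ℝ)).mpr hmn; linarith
        linarith
      refine iSup_le (fun n => ?_)
      have hnot : q - 1/(n+1) ∉ S := by
        intro hmem
        have h2 : q ≤ q - 1/(n+1) := csInf_le hbdd hmem
        have h0 : (0:ℝ) < 1/(n+1) := by positivity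
        linarith
      rw [hmemS] at hnot
      exact (not_le.mp hnot).le
    calc (P {ω | X ω < q}).toReal ≤ (ENNReal.ofReal α).toReal :=
          ENNReal.toReal_mono ENNReal.ofReal_ne_top hle
      _ = α := ENNReal.toReal_ofReal hα.1.le

/-- Properties of the modified indicator at the lower α-quantile. -/
theorem modInd_properties (P : Measure Ω) [IsProbabilityMeasure P] (α : ℝ)
    (hα : α ∈ Set.Ioo (0:ℝ) 1)
    (X : Ω → ℝ) (hX : Measurable X)
    (hXint : Integrable (fun ω => max (-(X ω)) 0) P) :
    (∀ ω, modInd P X α (lowerQuantile P X α) ω ∈ Set.Icc (0:ℝ) 1) ∧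
    (∫ ω, modInd P X α (lowerQuantile P X α) ω ∂P) = α ∧
    α⁻¹ * (∫ ω, X ω * modInd P X α (lowerQuantile P X α) ω ∂P) = tailMean P X α := by
  obtain ⟨h1, h2⟩ := quantile_props' P hα hX
  set q := lowerQuantile P X α with hq
  set A : Set Ω := {ω | X ω ≤ q} with hA
  set B : Set Ω := {ω | X ω = q} with hB
  set C : Set Ω := {ω | X ω < q} with hC
  have hmeasA : MeasurableSet A := measurableSet_le hX measurable_const
  have hmeasB : MeasurableSet B := measurableSet_eq_fun hX measurable_const
  have hfinA : P A ≠ ⊤ := measure_ne_top P _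
  have hfinB : P B ≠ ⊤ := measure_ne_top P _
  -- P A = P C + P B
  have hsplit : (P A).toReal = (P C).toReal + (P B).toReal := by
    have hU : A = C ∪ B := by
      ext ω; simp only [hA, hB, hC, Set.mem_setOf_eq, Set.mem_union]
      exact le_iff_lt_or_eq
    have hd : Disjoint C B := by
      rw [Set.disjoint_left]
      intro ω hω1 hω2
      simp only [hC, Set.mem_setOf_eq] at hω1
      simp only [hB, Set.mem_setOf_eq] at hω2
      linarith
    rw [hU, measure_union hd hmeasB, ENNReal.toReal_add (measure_ne_top P _) hfinB]
  -- integrability of A.indicator X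
  have hindX : Integrable (A.indicator X) P := by
    refine Integrable.mono (hXint.add (integrable_const |q|))
      (hX.aestronglyMeasurable.indicator hmeasA) (ae_of_all _ (fun ω => ?_))
    by_cases h : ω ∈ A
    · simp only [Set.indicator_of_mem h, Real.norm_eq_abs, Pi.add_apply]
      have hle : X ω ≤ q := h
      have h2 : (0:ℝ) ≤ max (-(X ω)) 0 := le_max_right _ _
      rw [abs_of_nonneg (by positivity : (0:ℝ) ≤ max (-(X ω)) 0 + |q|)]
      rcases le_or_gt 0 (X ω) with h3 | h3
      · rw [abs_of_nonneg h3]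
        have : X ω ≤ |q| := le_trans hle (le_abs_self q)
        linarith
      · rw [abs_of_neg h3]
        have : -(X ω) ≤ max (-(X ω)) 0 := le_max_left _ _
        have : (0:ℝ) ≤ |q| := abs_nonneg q
        linarith [le_max_left (-(X ω)) 0]
    · simp only [Set.indicator_of_notMem h, norm_zero, Real.norm_eq_abs, Pi.add_apply]
      rw [abs_of_nonneg (by positivity : (0:ℝ) ≤ max (-(X ω)) 0 + |q|)]
      positivity
  have hXmul : (fun ω => X ω * A.indicator (fun _ => (1:ℝ)) ω) = A.indicator X := by
    funext ω
    by_cases h : ω ∈ A <;> simp [Set.indicator_of_mem, Set.indicator_of_notMem, h]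
  by_cases hB0 : P B = 0
  · -- null atom case
    have hPA : (P A).toReal = α := by
      have : (P B).toReal = 0 := by rw [hB0]; simp
      have h3 : (P A).toReal ≤ α := by rw [hsplit, this, add_zero]; exact h2
      linarith
    have hmod : modInd P X α q = A.indicator (fun _ => (1:ℝ)) := by
      funext ω
      simp only [modInd, ← hA, ← hB, if_pos hB0]
    refine ⟨fun ω => ?_, ?_, ?_⟩
    · rw [hmod]
      by_cases h : ω ∈ A <;>
        simp [Set.indicator_of_mem, Set.indicator_of_notMem, h, Set.mem_Icc]
    · rw [hmod, integral_indicator_const (1:ℝ) hmeasA, smul_eq_mul, mul_one, measureReal_def, hPA]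
    · rw [hmod]
      simp only [tailMean, ← hq, ← hA, hPA, sub_self, mul_zero, add_zero]
      rw [hXmul, integral_indicator hmeasA]
  · -- atom case
    set c : ℝ := (α - (P A).toReal) / (P B).toReal with hc
    have hPBpos : 0 < (P B).toReal := ENNReal.toReal_pos hB0 hfinB
    have hc0 : c ≤ 0 := div_nonpos_of_nonpos_of_nonneg (by linarith) hPBpos.le
    have hc1 : -1 ≤ c := by
      rw [hc, le_div_iff₀ hPBpos]
      have : (P C).toReal ≤ α := h2
      linarith [hsplit]
    have hmod : modInd P X α q = fun ω =>
        A.indicator (fun _ => (1:ℝ)) ω + c * B.indicator (fun _ => (1:ℝ)) ω := by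
      funext ω
      simp only [modInd, if_neg hB0, ← hA, ← hB, ← hc]
    have hBsubA : B ⊆ A := fun ω h => le_of_eq h
    have hintA1 : Integrable (A.indicator (fun _ => (1:ℝ))) P :=
      (integrable_const (1:ℝ)).indicator hmeasA
    have hintB1 : Integrable (fun ω => c * B.indicator (fun _ => (1:ℝ)) ω) P :=
      ((integrable_const (1:ℝ)).indicator hmeasB).const_mul c
    have hcmul : c * (P B).toReal = α - (P A).toReal :=
      div_mul_cancel₀ _ (ne_of_gt hPBpos)
    refine ⟨fun ω => ?_, ?_, ?_⟩
    · rw [hmod]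
      by_cases hωB : ω ∈ B
      · have hωA : ω ∈ A := hBsubA hωB
        simp only [Set.indicator_of_mem hωA, Set.indicator_of_mem hωB, mul_one, Set.mem_Icc]
        constructor <;> linarith
      · by_cases hωA : ω ∈ A <;>
          simp [Set.indicator_of_mem, Set.indicator_of_notMem, hωA, hωB, Set.mem_Icc]
    · rw [hmod, integral_add hintA1 hintB1, integral_indicator_const (1:ℝ) hmeasA,
        integral_const_mul, integral_indicator_const (1:ℝ) hmeasB]
      simp only [smul_eq_mul, mul_one, measureReal_def]
      rw [hcmul]; ring
    · have hfun : (fun ω => X ω * modInd P X α q ω)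
          = fun ω => A.indicator X ω + (c * q) * B.indicator (fun _ => (1:ℝ)) ω := by
        funext ω
        rw [hmod]
        by_cases hωB : ω ∈ B
        · have hωA : ω ∈ A := hBsubA hωB
          have hXq : X ω = q := hωB
          simp only [Set.indicator_of_mem hωA, Set.indicator_of_mem hωB, hXq]
          ring
        · by_cases hωA : ω ∈ A <;>
            simp [Set.indicator_of_mem, Set.indicator_of_notMem, hωA, hωB]
      rw [hfun, integral_add hindX (((integrable_const (1:ℝ)).indicator hmeasB).const_mul _),
        integral_const_mul, integral_indicator_const (1:ℝ) hmeasB,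
        integral_indicator hmeasA]
      simp only [tailMean, ← hq, smul_eq_mul, mul_one, measureReal_def]
      congr 1
      have : c * q * (P B).toReal = q * (α - (P A).toReal) := by
        rw [mul_comm c q, mul_assoc, hcmul]
      rw [this]

end
end

section
/- Let α ∈ (0,1) be fixed, X a real-valued random variable with E[X⁻] < ∞, and (X₁, X₂, …) an independent sequence of random variables each with the same distribution as X. For each n, let X_{1:n} ≤ … ≤ X_{n:n} denote the order statistics of (X₁, …, Xₙ). Then with probability 1, lim_{n→∞} ( Σ_{i=1}^{⌊nα⌋} X_{i:n} ) / ⌊nα⌋ = TM_α(X), where ⌊·⌋ denotes the integer part. -/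
open MeasureTheory ProbabilityTheory Filter
open scoped Classical

noncomputable section

variable {Ω : Type*} [MeasurableSpace Ω]

set_option maxHeartbeats 1000000

section AuxTailSLLN
open List Filter Topology

lemma filter_sum_eq (p : ℝ → Bool) (l : List ℝ) :
    (l.filter p).sum = (l.map fun t => if p t then t else 0).sum := by
  induction l with
  | nil => simp
  | cons a t ih =>
    by_cases h : p a <;> simp [List.filter_cons, h, ih]

lemma countP_cast_eq (p : ℝ → Bool) (l : List ℝ) :
    (l.countP p : ℝ) = (l.map fun t => if p t then (1:ℝ) else 0).sum := by
  induction l with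
  | nil => simp
  | cons a t ih =>
    by_cases h : p a <;> simp [List.countP_cons, h, ih] <;> ring

lemma sorted_filter_eq_take (l : List ℝ) (hl : l.Pairwise (· ≤ ·)) (y : ℝ) :
    l.filter (fun t => decide (t ≤ y)) = l.take (l.countP (fun t => decide (t ≤ y))) := by
  induction l with
  | nil => simp
  | cons a t ih =>
    rw [List.pairwise_cons] at hl
    by_cases h : a ≤ y
    · simp [List.filter_cons, List.countP_cons, h, ih hl.2]
    · have ht : t.countP (fun t => decide (t ≤ y)) = 0 := by
        rw [List.countP_eq_zero]
        intro b hb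
        simp only [decide_eq_true_eq]
        exact fun hby => h (le_trans (hl.1 b hb) hby)
      have htf : t.filter (fun t => decide (t ≤ y)) = [] := by
        rw [List.filter_eq_nil_iff]
        intro b hb
        simp only [decide_eq_true_eq]
        exact fun hby => h (le_trans (hl.1 b hb) hby)
      simp [List.filter_cons, List.countP_cons, h, ht, htf]

lemma mem_drop_gt (l : List ℝ) (hl : l.Pairwise (· ≤ ·)) (u : ℝ) {a : ℕ}
    (ha : l.countP (fun t => decide (t ≤ u)) ≤ a) {t : ℝ} (ht : t ∈ l.drop a) : u < t := by
  set c := l.countP (fun t => decide (t ≤ u)) with hc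
  have h0 : (l.drop c).countP (fun t => decide (t ≤ u)) = 0 := by
    have := List.countP_append (p := fun t => decide (t ≤ u)) (l₁ := l.take c) (l₂ := l.drop c)
    rw [List.take_append_drop] at this
    have htake : (l.take c).countP (fun t => decide (t ≤ u)) = c := by
      have h1 : l.take c = l.filter (fun t => decide (t ≤ u)) := (sorted_filter_eq_take l hl u).symm
      have h2 : (l.filter (fun t => decide (t ≤ u))).countP (fun t => decide (t ≤ u))
          = (l.filter (fun t => decide (t ≤ u))).length :=
        List.countP_eq_length.2 (fun b hb => (List.mem_filter.1 hb).2)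
      rw [h1, h2, ← List.countP_eq_length_filter]
    omega
  have : t ∈ l.drop c := by
    have : l.drop a = (l.drop c).drop (a - c) := by
      rw [List.drop_drop]; congr 1; omega
    rw [this] at ht
    exact List.drop_subset _ _ ht
  rw [List.countP_eq_zero] at h0
  have := h0 t this
  simp only [decide_eq_true_eq] at this
  exact lt_of_not_ge this

lemma mem_take_le (l : List ℝ) (hl : l.Pairwise (· ≤ ·)) (v : ℝ) {b : ℕ}
    (hb : b ≤ l.countP (fun t => decide (t ≤ v))) {t : ℝ} (ht : t ∈ l.take b) : t ≤ v := by
  set c := l.countP (fun t => decide (t ≤ v)) with hc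
  have h1 : l.take b = (l.take c).take b := by
    rw [List.take_take, min_eq_left hb]
  rw [h1, ← sorted_filter_eq_take l hl v] at ht
  have := List.of_mem_filter (List.take_subset _ _ ht)
  simpa using this

lemma take_sum_sub_bounds (l : List ℝ) (hl : l.Pairwise (· ≤ ·)) {a b : ℕ} (hab : a ≤ b)
    (hb : b ≤ l.length) {u v : ℝ}
    (hu : l.countP (fun t => decide (t ≤ u)) ≤ a)
    (hv : b ≤ l.countP (fun t => decide (t ≤ v))) :
    ((b : ℝ) - a) * u ≤ (l.take b).sum - (l.take a).sum ∧
      (l.take b).sum - (l.take a).sum ≤ ((b : ℝ) - a) * v := by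
  have hsplit : l.take b = l.take a ++ (l.drop a).take (b - a) := by
    rw [← List.take_add]; congr 1; omega
  set D := (l.drop a).take (b - a) with hD
  have hlen : D.length = b - a := by
    simp [hD, List.length_take, List.length_drop]; omega
  have hsum : (l.take b).sum = (l.take a).sum + D.sum := by rw [hsplit, List.sum_append]
  have hlow : ∀ t ∈ D, u ≤ t := fun t ht =>
    le_of_lt (mem_drop_gt l hl u hu (List.take_subset _ _ ht))
  have hhigh : ∀ t ∈ D, t ≤ v := by
    intro t ht
    have : t ∈ l.take b := by rw [hsplit]; exact List.mem_append_right _ ht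
    exact mem_take_le l hl v hv this
  have h1 : D.length • u ≤ D.sum := List.card_nsmul_le_sum D u hlow
  have h2 : D.sum ≤ D.length • v := List.sum_le_card_nsmul D v hhigh
  rw [hlen] at h1 h2
  have hc : ((b - a : ℕ) : ℝ) = (b : ℝ) - a := by push_cast [Nat.cast_sub hab]; ring
  constructor
  · rw [hsum]; have := h1; rw [nsmul_eq_mul, hc] at this; linarith
  · rw [hsum]; have := h2; rw [nsmul_eq_mul, hc] at this; linarith

lemma floor_div_tendsto (α : ℝ) (hα0 : 0 < α) :
    Tendsto (fun n : ℕ => (⌊(n:ℝ) * α⌋₊ : ℝ) / n) atTop (𝓝 α) := by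
  have hlow : Tendsto (fun n : ℕ => α - 1 / (n:ℝ)) atTop (𝓝 α) := by
    have := tendsto_one_div_atTop_nhds_zero_nat (𝕜 := ℝ)
    have h2 := (tendsto_const_nhds (x := α) (f := atTop (α := ℕ))).sub this
    simpa using h2
  apply tendsto_of_tendsto_of_tendsto_of_le_of_le' hlow tendsto_const_nhds
  · filter_upwards [eventually_ge_atTop 1] with n hn
    have hn0 : (0:ℝ) < n := by exact_mod_cast hn
    have h1 : (n:ℝ) * α < ⌊(n:ℝ)*α⌋₊ + 1 := Nat.lt_floor_add_one _
    rw [le_div_iff₀ hn0]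
    have h2 : (α - 1/(n:ℝ)) * n = n * α - 1 := by field_simp; try ring
    rw [h2]; linarith
  · filter_upwards [eventually_ge_atTop 1] with n hn
    have hn0 : (0:ℝ) < n := by exact_mod_cast hn
    have h1 : (⌊(n:ℝ)*α⌋₊ : ℝ) ≤ (n:ℝ) * α := Nat.floor_le (by positivity)
    rw [div_le_iff₀ hn0]
    nlinarith

lemma est_aux (t a K NN x α Fx μ ε : ℝ)
    (h1 : |a - μ| < ε/4)
    (hrx : |((K - NN) - (α - Fx)) * x| ≤ ε/4)
    (hmid0 : 0 ≤ t - a - (K - NN) * x)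
    (hmid1 : t - a - (K - NN) * x ≤ ε/4) :
    |t - (μ + x * (α - Fx))| < ε := by
  have hε : 0 < ε := by
    have := abs_nonneg (a - μ); linarith
  have key : t - (μ + x * (α - Fx))
      = (a - μ) + (t - a - (K - NN) * x) + ((K - NN) - (α - Fx)) * x := by ring
  rw [key, abs_lt]; rw [abs_lt] at h1
  have h2 := neg_abs_le (((K - NN) - (α - Fx)) * x)
  have h3 := le_abs_self (((K - NN) - (α - Fx)) * x)
  constructor <;> linarith

lemma det_tendsto (u : ℕ → ℝ) (α x y₂ Fx Fy₂ μ : ℝ)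
    (hα0 : 0 < α) (hα1 : α < 1) (hxy₂ : x ≤ y₂) (hαFx : α ≤ Fx) (hFy₂ : α < Fy₂)
    (hA : Tendsto (fun n : ℕ => (∑ i ∈ Finset.range n, (if u i ≤ x then u i else 0)) / n)
      atTop (𝓝 μ))
    (hN : Tendsto (fun n : ℕ => (∑ i ∈ Finset.range n, (if u i ≤ x then (1:ℝ) else 0)) / n)
      atTop (𝓝 Fx))
    (hc₂ : Tendsto (fun n : ℕ => (∑ i ∈ Finset.range n, (if u i ≤ y₂ then (1:ℝ) else 0)) / n)
      atTop (𝓝 Fy₂))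
    (hlow : ∀ m : ℕ, ∃ Fm, Fm < α ∧
      Tendsto (fun n : ℕ => (∑ i ∈ Finset.range n,
        (if u i ≤ x - 1/((m:ℝ)+1) then (1:ℝ) else 0)) / n) atTop (𝓝 Fm)) :
    Tendsto (fun n : ℕ =>
      ((List.insertionSort (· ≤ ·) (List.ofFn fun i : Fin n => u i)).take ⌊(n:ℝ)*α⌋₊).sum
        / (⌊(n:ℝ)*α⌋₊ : ℝ)) atTop (𝓝 (α⁻¹ * (μ + x * (α - Fx)))) := by
  classical
  set L : ℕ → List ℝ := fun n => List.insertionSort (· ≤ ·) (List.ofFn fun i : Fin n => u i)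
    with hLdef
  have hsort : ∀ n, (L n).Pairwise (· ≤ ·) := fun n => List.pairwise_insertionSort _ _
  have hlen : ∀ n, (L n).length = n := fun n => by
    rw [hLdef]; simp [(List.perm_insertionSort (α := ℝ) (· ≤ ·) _).length_eq]
  have hcnt : ∀ (y : ℝ) (n : ℕ), (((L n).countP (fun t => decide (t ≤ y))) : ℝ)
      = ∑ i ∈ Finset.range n, (if u i ≤ y then (1:ℝ) else 0) := by
    intro y n
    rw [hLdef]
    rw [(List.perm_insertionSort (· ≤ ·) _).countP_eq, countP_cast_eq, List.map_ofFn]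
    rw [List.sum_ofFn]
    simp only [Function.comp, decide_eq_true_eq]
    exact Fin.sum_univ_eq_sum_range (fun j => if u j ≤ y then (1:ℝ) else 0) n
  have hfil : ∀ n : ℕ, (((L n).filter (fun t => decide (t ≤ x))).sum : ℝ)
      = ∑ i ∈ Finset.range n, (if u i ≤ x then u i else 0) := by
    intro n
    rw [hLdef]
    rw [((List.perm_insertionSort (· ≤ ·) _).filter _).sum_eq, filter_sum_eq, List.map_ofFn]
    rw [List.sum_ofFn]
    simp only [Function.comp, decide_eq_true_eq]
    exact Fin.sum_univ_eq_sum_range (fun j => if u j ≤ x then u j else 0) n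
  set k : ℕ → ℕ := fun n => ⌊(n:ℝ)*α⌋₊ with hkdef
  set N : ℕ → ℕ := fun n => (L n).countP (fun t => decide (t ≤ x)) with hNdef
  set T : ℕ → ℝ := fun n => ((L n).take (k n)).sum with hTdef
  set A : ℕ → ℝ := fun n => ((L n).filter (fun t => decide (t ≤ x))).sum with hAdef
  have hk : Tendsto (fun n : ℕ => (k n : ℝ) / n) atTop (𝓝 α) := floor_div_tendsto α hα0
  have hAt : Tendsto (fun n : ℕ => A n / n) atTop (𝓝 μ) := by
    simp only [hAdef, hfil]; exact hA
  have hNt : Tendsto (fun n : ℕ => (N n : ℝ) / n) atTop (𝓝 Fx) := by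
    simp only [hNdef, hcnt]; exact hN
  have hc₂t : Tendsto (fun n : ℕ =>
      (((L n).countP (fun t => decide (t ≤ y₂))) : ℝ) / n) atTop (𝓝 Fy₂) := by
    simp only [hcnt]; exact hc₂
  have Hmain : Tendsto (fun n : ℕ => T n / n) atTop (𝓝 (μ + x * (α - Fx))) := by
    rw [Metric.tendsto_atTop]
    intro ε hε
    obtain ⟨m, hm⟩ := exists_nat_one_div_lt (show (0:ℝ) < ε/4 by linarith)
    obtain ⟨Fm, hFmα, hFmt⟩ := hlow m
    set y₁ : ℝ := x - 1/((m:ℝ)+1) with hy₁def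
    have hm1pos : (0:ℝ) < 1/((m:ℝ)+1) := by positivity
    have hy₁lt : y₁ < x := by rw [hy₁def]; linarith
    have hxy₁ : x - y₁ < ε/4 := by rw [hy₁def]; simpa using hm
    have hcy₁t : Tendsto (fun n : ℕ =>
        (((L n).countP (fun t => decide (t ≤ y₁))) : ℝ) / n) atTop (𝓝 Fm) := by
      simp only [hcnt]; exact hFmt
    set c : ℝ := y₂ - x + |x| + 1 with hcdef
    have habs := abs_nonneg x
    have hc0 : (0:ℝ) < c := by rw [hcdef]; linarith
    have hcx : |x| ≤ c := by rw [hcdef]; linarith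
    have hcy : y₂ - x ≤ c := by rw [hcdef]; linarith
    set δ : ℝ := ε / (8 * c) with hδdef
    have hδ0 : 0 < δ := by rw [hδdef]; positivity
    have hδc : δ * c = ε / 8 := by rw [hδdef]; field_simp; try ring
    have eA : ∀ᶠ n : ℕ in atTop, |A n / n - μ| < ε/4 := by
      have := hAt.eventually (Metric.ball_mem_nhds μ (show (0:ℝ) < ε/4 by linarith))
      simpa [Real.dist_eq] using this
    have eN : ∀ᶠ n : ℕ in atTop, |(N n : ℝ) / n - Fx| < δ := by
      have := hNt.eventually (Metric.ball_mem_nhds Fx hδ0)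
      simpa [Real.dist_eq] using this
    have eK : ∀ᶠ n : ℕ in atTop, |(k n : ℝ) / n - α| < δ := by
      have := hk.eventually (Metric.ball_mem_nhds α hδ0)
      simpa [Real.dist_eq] using this
    have en1 : ∀ᶠ n : ℕ in atTop, 1 ≤ n := eventually_ge_atTop 1
    have ec₂ : ∀ᶠ n : ℕ in atTop, k n ≤ (L n).countP (fun t => decide (t ≤ y₂)) := by
      have h1 : ∀ᶠ n : ℕ in atTop, (k n : ℝ) / n < (α + Fy₂)/2 :=
        hk.eventually (eventually_lt_nhds (by linarith))
      have h2 : ∀ᶠ n : ℕ in atTop, (α + Fy₂)/2 <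
          (((L n).countP (fun t => decide (t ≤ y₂))) : ℝ) / n :=
        hc₂t.eventually (eventually_gt_nhds (by linarith))
      filter_upwards [h1, h2, en1] with n ha hb hn
      have hn0 : (0:ℝ) < n := by exact_mod_cast hn
      have hlt : (k n : ℝ) / n < (((L n).countP (fun t => decide (t ≤ y₂))) : ℝ) / n :=
        ha.trans hb
      have := mul_lt_mul_of_pos_right hlt hn0
      rw [div_mul_cancel₀ _ (ne_of_gt hn0), div_mul_cancel₀ _ (ne_of_gt hn0)] at this
      exact_mod_cast this.le
    have ey₁ : ∀ᶠ n : ℕ in atTop, (L n).countP (fun t => decide (t ≤ y₁)) ≤ k n := by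
      have h1 : ∀ᶠ n : ℕ in atTop,
          (((L n).countP (fun t => decide (t ≤ y₁))) : ℝ) / n < (Fm + α)/2 :=
        hcy₁t.eventually (eventually_lt_nhds (by linarith))
      have h2 : ∀ᶠ n : ℕ in atTop, (Fm + α)/2 < (k n : ℝ) / n :=
        hk.eventually (eventually_gt_nhds (by linarith))
      filter_upwards [h1, h2, en1] with n ha hb hn
      have hn0 : (0:ℝ) < n := by exact_mod_cast hn
      have hlt : (((L n).countP (fun t => decide (t ≤ y₁))) : ℝ) / n < (k n : ℝ) / n :=
        ha.trans hb
      have := mul_lt_mul_of_pos_right hlt hn0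
      rw [div_mul_cancel₀ _ (ne_of_gt hn0), div_mul_cancel₀ _ (ne_of_gt hn0)] at this
      exact_mod_cast this.le
    have final : ∀ᶠ n : ℕ in atTop, dist (T n / n) (μ + x * (α - Fx)) < ε := by
      filter_upwards [eA, eN, eK, ec₂, ey₁, en1] with n h1 h2 h3 h4 h5 h6
      rw [Real.dist_eq]
      have hn0 : (0:ℝ) < n := by exact_mod_cast h6
      have hkn_le : k n ≤ n := by
        have hh : ((k n : ℕ) : ℝ) ≤ (n:ℝ) * α := Nat.floor_le (by positivity)
        have : ((k n : ℕ) : ℝ) ≤ (n : ℝ) := by nlinarith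
        exact_mod_cast this
      have hNn_le : N n ≤ n := le_of_le_of_eq List.countP_le_length (hlen n)
      have hKpos : (0:ℝ) ≤ (k n : ℝ) / n := by positivity
      have hNN1 : (N n : ℝ) / n ≤ 1 := by
        rw [div_le_one hn0]; exact_mod_cast hNn_le
      rw [abs_lt] at h2 h3
      have hrabs : |((k n : ℝ)/n - (N n : ℝ)/n) - (α - Fx)| ≤ 2*δ := by
        rw [abs_le]; constructor <;> linarith
      have hrx : |(((k n : ℝ)/n - (N n : ℝ)/n) - (α - Fx)) * x| ≤ ε/4 := by
        rw [abs_mul]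
        have step : |((k n : ℝ)/n - (N n : ℝ)/n) - (α - Fx)| * |x| ≤ (2*δ) * c :=
          mul_le_mul hrabs hcx habs (by linarith)
        have : (2*δ) * c = ε/4 := by rw [mul_assoc, hδc]; ring
        linarith
      have hmidident : T n / n - A n / n - ((k n : ℝ)/n - (N n : ℝ)/n) * x
          = (T n - A n - ((k n : ℝ) - (N n : ℝ)) * x) / n := by
        field_simp; try ring
      have hAtake : A n = ((L n).take (N n)).sum := by
        rw [hAdef, hNdef, ← sorted_filter_eq_take _ (hsort n) x]
      have hTtake : T n = ((L n).take (k n)).sum := rfl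
      rcases le_total (N n) (k n) with hcase | hcase
      · obtain ⟨hLb, hUb⟩ := take_sum_sub_bounds (L n) (hsort n) hcase
          (le_of_le_of_eq hkn_le (hlen n).symm) (le_refl (N n)) h4
        rw [← hAtake, ← hTtake] at hLb hUb
        apply est_aux (T n / n) (A n / n) ((k n : ℝ)/n) ((N n : ℝ)/n) x α Fx μ ε h1 hrx
        · rw [hmidident]
          apply div_nonneg _ hn0.le
          linarith
        · rw [hmidident]
          have hKN0 : (0:ℝ) ≤ (k n : ℝ)/n - (N n : ℝ)/n := by
            have hc' : (N n : ℝ) ≤ (k n : ℝ) := by exact_mod_cast hcase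
            have hdd : (N n : ℝ)/n ≤ (k n : ℝ)/n := by gcongr
            linarith
          have hKNδ : (k n : ℝ)/n - (N n : ℝ)/n ≤ 2*δ := by linarith
          have hnum : T n - A n - ((k n : ℝ) - (N n : ℝ)) * x
              ≤ ((k n : ℝ) - (N n : ℝ)) * (y₂ - x) := by linarith [hUb, mul_sub ((k n : ℝ) - (N n : ℝ)) y₂ x]
          have hdiv : (T n - A n - ((k n : ℝ) - (N n : ℝ)) * x) / n
              ≤ ((k n : ℝ)/n - (N n : ℝ)/n) * (y₂ - x) := by
            rw [div_le_iff₀ hn0]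
            have hexp : ((k n : ℝ)/n - (N n : ℝ)/n) * (y₂ - x) * n
                = ((k n : ℝ) - (N n : ℝ)) * (y₂ - x) := by
              field_simp
            rw [hexp]; exact hnum
          have hfin : ((k n : ℝ)/n - (N n : ℝ)/n) * (y₂ - x) ≤ (2*δ) * c := by
            have s1 : ((k n : ℝ)/n - (N n : ℝ)/n) * (y₂ - x) ≤ (2*δ) * (y₂ - x) :=
              mul_le_mul_of_nonneg_right hKNδ (by linarith)
            have s2 : (2*δ) * (y₂ - x) ≤ (2*δ) * c :=
              mul_le_mul_of_nonneg_left hcy (by linarith)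
            exact le_trans s1 s2
          have : (2*δ) * c = ε/4 := by rw [mul_assoc, hδc]; ring
          linarith
      · obtain ⟨hLb, hUb⟩ := take_sum_sub_bounds (L n) (hsort n) hcase
          (le_of_le_of_eq hNn_le (hlen n).symm) h5 (le_refl (N n))
        rw [← hAtake, ← hTtake] at hLb hUb
        apply est_aux (T n / n) (A n / n) ((k n : ℝ)/n) ((N n : ℝ)/n) x α Fx μ ε h1 hrx
        · rw [hmidident]
          apply div_nonneg _ hn0.le
          linarith
        · rw [hmidident]
          have hKN0 : (0:ℝ) ≤ (N n : ℝ)/n - (k n : ℝ)/n := by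
            have hc' : (k n : ℝ) ≤ (N n : ℝ) := by exact_mod_cast hcase
            have hdd : (k n : ℝ)/n ≤ (N n : ℝ)/n := by gcongr
            linarith
          have hKN1 : (N n : ℝ)/n - (k n : ℝ)/n ≤ 1 := by linarith
          have hnum : T n - A n - ((k n : ℝ) - (N n : ℝ)) * x
              ≤ ((N n : ℝ) - (k n : ℝ)) * (x - y₁) := by
            have := hLb
            nlinarith [mul_sub ((N n : ℝ) - (k n : ℝ)) x y₁]
          have hdiv : (T n - A n - ((k n : ℝ) - (N n : ℝ)) * x) / n
              ≤ ((N n : ℝ)/n - (k n : ℝ)/n) * (x - y₁) := by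
            rw [div_le_iff₀ hn0]
            have hexp : ((N n : ℝ)/n - (k n : ℝ)/n) * (x - y₁) * n
                = ((N n : ℝ) - (k n : ℝ)) * (x - y₁) := by
              field_simp
            rw [hexp]; exact hnum
          have hfin : ((N n : ℝ)/n - (k n : ℝ)/n) * (x - y₁) ≤ 1 * (x - y₁) :=
            mul_le_mul_of_nonneg_right hKN1 (by linarith)
          linarith
    exact eventually_atTop.1 final
  have hαinv : Tendsto (fun n : ℕ => (n : ℝ) / (k n : ℝ)) atTop (𝓝 α⁻¹) := by
    have h := hk.inv₀ (ne_of_gt hα0)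
    apply h.congr
    intro n; rw [inv_div]
  have hprod := Hmain.mul hαinv
  rw [mul_comm] at hprod
  have ekpos : ∀ᶠ n : ℕ in atTop, 1 ≤ k n := by
    have h2 : Tendsto (fun n : ℕ => (n:ℝ) * α) atTop atTop :=
      Tendsto.atTop_mul_const hα0 tendsto_natCast_atTop_atTop
    filter_upwards [h2.eventually_ge_atTop 1] with n hn
    exact Nat.le_floor (by exact_mod_cast hn)
  apply hprod.congr'
  filter_upwards [ekpos, eventually_ge_atTop 1] with n hk1 hn1
  have hkpos : (0:ℝ) < (k n : ℝ) := by exact_mod_cast hk1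
  have hnpos : (0:ℝ) < (n : ℝ) := by exact_mod_cast hn1
  show T n / n * ((n:ℝ) / (k n : ℝ)) = T n / (k n : ℝ)
  field_simp


section AuxProb

variable {Ω : Type*} [MeasurableSpace Ω]

open Topology in
lemma aux_slln_comp (P : Measure Ω) [IsProbabilityMeasure P]
    (X : Ω → ℝ) (hX : Measurable X)
    (Xs : ℕ → Ω → ℝ) (hXs : ∀ n, Measurable (Xs n))
    (hindep : iIndepFun Xs P)
    (hident : ∀ n, Measure.map (Xs n) P = Measure.map X P)
    (h : ℝ → ℝ) (hm : Measurable h) (hint : Integrable (fun ω => h (X ω)) P) :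
    ∀ᵐ ω ∂P, Tendsto (fun n : ℕ => (∑ i ∈ Finset.range n, h (Xs i ω)) / n)
      atTop (𝓝 (∫ ω, h (X ω) ∂P)) := by
  have hid : ∀ i, IdentDistrib (Xs i) X P P :=
    fun i => ⟨(hXs i).aemeasurable, hX.aemeasurable, hident i⟩
  set Y : ℕ → Ω → ℝ := fun i ω => h (Xs i ω) with hY
  have hY0 : IdentDistrib (Y 0) (fun ω => h (X ω)) P P := (hid 0).comp hm
  have hintY : Integrable (Y 0) P := hY0.integrable_iff.2 hint
  have hindepY : Pairwise (Function.onFun (IndepFun · · P) Y) :=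
    fun i j hij => (hindep.indepFun hij).comp hm hm
  have hidentY : ∀ i, IdentDistrib (Y i) (Y 0) P P :=
    fun i => ((hid i).trans (hid 0).symm).comp hm
  have := strong_law_ae_real Y hintY hindepY hidentY
  rw [show P[Y 0] = ∫ ω, h (X ω) ∂P from hY0.integral_eq] at this
  exact this

end AuxProb

end AuxTailSLLN

open scoped Topology ENNReal

/-- Tail strong law of large numbers: the average of the ⌊nα⌋ smallest
order statistics converges almost surely to the α-tail mean. -/
theorem tail_slln (P : Measure Ω) [IsProbabilityMeasure P] (α : ℝ)
    (hα : α ∈ Set.Ioo (0:ℝ) 1)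
    (X : Ω → ℝ) (hX : Measurable X)
    (hXint : Integrable (fun ω => max (-(X ω)) 0) P)
    (Xs : ℕ → Ω → ℝ) (hXs : ∀ n, Measurable (Xs n))
    (hindep : iIndepFun Xs P)
    (hident : ∀ n, Measure.map (Xs n) P = Measure.map X P) :
    ∀ᵐ ω ∂P, Tendsto
      (fun n : ℕ => tailSum Xs n ⌊(n : ℝ) * α⌋₊ ω / (⌊(n : ℝ) * α⌋₊ : ℝ))
      atTop (nhds (tailMean P X α)) := by
  obtain ⟨hα0, hα1⟩ := hα
  have hms : ∀ y : ℝ, MeasurableSet {ω | X ω ≤ y} := fun y => hX measurableSet_Iic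
  set F : ℝ → ℝ := fun y => (P {ω | X ω ≤ y}).toReal with hFdef
  have hFmono : Monotone F := by
    intro a b hab
    exact ENNReal.toReal_mono (measure_ne_top P _)
      (measure_mono fun ω hω => le_trans hω hab)
  have hy2' : ∃ z : ℝ, α < F z := by
    have hmon : Monotone (fun n : ℕ => {ω | X ω ≤ (n:ℝ)}) := by
      intro a b hab ω hω
      simp only [Set.mem_setOf_eq] at hω ⊢
      exact le_trans hω (by exact_mod_cast hab)
    have hU := tendsto_measure_iUnion_atTop (μ := P) hmon
    have hUeq : (⋃ n : ℕ, {ω | X ω ≤ (n:ℝ)}) = Set.univ := by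
      ext ω
      simp only [Set.mem_iUnion, Set.mem_univ, iff_true, Set.mem_setOf_eq]
      exact exists_nat_ge (X ω)
    rw [hUeq, measure_univ] at hU
    have hUr : Tendsto (fun n : ℕ => F (n:ℝ)) atTop (𝓝 1) := by
      have h1 := (ENNReal.tendsto_toReal (by simp : (1:ℝ≥0∞) ≠ ⊤)).comp hU
      simpa [hFdef, Function.comp_def] using h1
    obtain ⟨n₂, hn₂⟩ := (hUr.eventually (eventually_gt_nhds hα1)).exists
    exact ⟨n₂, hn₂⟩
  obtain ⟨z₂, hz₂⟩ := hy2'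
  have ht0 : ∃ t₀ : ℝ, F t₀ < α := by
    have hant : Antitone (fun n : ℕ => {ω | X ω ≤ -(n:ℝ)}) := by
      intro a b hab ω hω
      simp only [Set.mem_setOf_eq] at hω ⊢
      refine le_trans hω ?_
      simp only [neg_le_neg_iff]
      exact_mod_cast hab
    have hI := tendsto_measure_iInter_atTop (μ := P)
      (fun n => (hms _).nullMeasurableSet) hant ⟨0, measure_ne_top P _⟩
    have hIeq : (⋂ n : ℕ, {ω | X ω ≤ -(n:ℝ)}) = ∅ := by
      ext ω
      simp only [Set.mem_iInter, Set.mem_empty_iff_false, iff_false, not_forall,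
        Set.mem_setOf_eq, not_le]
      obtain ⟨n, hn⟩ := exists_nat_gt (-(X ω))
      exact ⟨n, by linarith⟩
    rw [hIeq, measure_empty] at hI
    have hIr : Tendsto (fun n : ℕ => F (-(n:ℝ))) atTop (𝓝 0) := by
      have h1 := (ENNReal.tendsto_toReal (by simp : (0:ℝ≥0∞) ≠ ⊤)).comp hI
      simpa [hFdef, Function.comp_def] using h1
    obtain ⟨n₀, hn₀⟩ := (hIr.eventually (eventually_lt_nhds hα0)).exists
    exact ⟨-(n₀:ℝ), hn₀⟩
  obtain ⟨t₀, ht₀⟩ := ht0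
  set S : Set ℝ := {y | α ≤ F y} with hSdef
  have hSne : S.Nonempty := ⟨z₂, le_of_lt hz₂⟩
  have hSbdd : BddBelow S := by
    refine ⟨t₀, fun s hs => ?_⟩
    by_contra hc
    push_neg at hc
    exact absurd (le_trans hs (hFmono hc.le)) (not_le.2 ht₀)
  set x : ℝ := sInf S with hxdef
  set y₂ : ℝ := max x z₂ with hy₂def
  have hxy₂ : x ≤ y₂ := le_max_left _ _
  have hFy₂ : α < F y₂ := lt_of_lt_of_le hz₂ (hFmono (le_max_right _ _))
  have hFx : α ≤ F x := by
    have hant : Antitone (fun n : ℕ => {ω | X ω ≤ x + 1/((n:ℝ)+1)}) := by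
      intro a b hab ω hω
      simp only [Set.mem_setOf_eq] at hω ⊢
      refine le_trans hω ?_
      have h1 : 1/((b:ℝ)+1) ≤ 1/((a:ℝ)+1) := by
        apply one_div_le_one_div_of_le (by positivity)
        have : ((a:ℝ)) ≤ (b:ℝ) := by exact_mod_cast hab
        linarith
      linarith
    have hI := tendsto_measure_iInter_atTop (μ := P)
      (fun n => (hms _).nullMeasurableSet) hant ⟨0, measure_ne_top P _⟩
    have hIeq : (⋂ n : ℕ, {ω | X ω ≤ x + 1/((n:ℝ)+1)}) = {ω | X ω ≤ x} := by
      ext ω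
      simp only [Set.mem_iInter, Set.mem_setOf_eq]
      constructor
      · intro h
        by_contra hc
        push_neg at hc
        obtain ⟨n, hn⟩ := exists_nat_one_div_lt (sub_pos.2 hc)
        exact absurd (h n) (by push_cast; push_cast at hn; linarith)
      · intro h n
        have : (0:ℝ) < 1/((n:ℝ)+1) := by positivity
        linarith
    rw [hIeq] at hI
    have hIr : Tendsto (fun n : ℕ => F (x + 1/((n:ℝ)+1))) atTop (𝓝 (F x)) := by
      have h1 := (ENNReal.tendsto_toReal (measure_ne_top P _)).comp hI
      simpa [hFdef, Function.comp_def] using h1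
    apply ge_of_tendsto' hIr
    intro n
    have hpos : (0:ℝ) < 1/((n:ℝ)+1) := by positivity
    obtain ⟨s, hsS, hs⟩ := (csInf_lt_iff hSbdd hSne).1
      (show sInf S < x + 1/((n:ℝ)+1) by rw [← hxdef]; linarith)
    exact le_trans hsS (hFmono hs.le)
  have hFlt : ∀ y, y < x → F y < α := by
    intro y hy
    by_contra hc
    push_neg at hc
    exact absurd (csInf_le hSbdd hc) (not_le.2 hy)
  set f : ℝ → ℝ := fun t => if t ≤ x then t else 0 with hfdef
  have hfm : Measurable f := Measurable.ite measurableSet_Iic measurable_id measurable_const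
  have hfint : Integrable (fun ω => f (X ω)) P := by
    apply Integrable.mono (hXint.add (integrable_const |x|))
      ((hfm.comp hX).aestronglyMeasurable)
    filter_upwards with ω
    simp only [Real.norm_eq_abs, hfdef]
    have habs2 : abs (max (-(X ω)) 0 + |x|) = max (-(X ω)) 0 + |x| :=
      abs_of_nonneg (by positivity)
    refine le_trans ?_ (le_of_eq habs2.symm)
    simp only [Function.comp_apply]
    by_cases h : X ω ≤ x
    · rw [if_pos h]
      rcases abs_cases (X ω) with ⟨he, hp⟩ | ⟨he, hp⟩
      · rw [he]
        linarith [le_abs_self x, le_max_right (-(X ω)) (0:ℝ)]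
      · rw [he]
        linarith [abs_nonneg x, le_max_left (-(X ω)) (0:ℝ)]
    · rw [if_neg h]
      rw [abs_zero]
      positivity
  have hInt_f_eq : ∫ ωx, f (X ωx) ∂P = ∫ ωx in {ω | X ω ≤ x}, X ωx ∂P := by
    rw [← MeasureTheory.integral_indicator (hms x)]
    apply MeasureTheory.integral_congr_ae
    filter_upwards with ωx
    simp [hfdef, Set.indicator_apply, Set.mem_setOf_eq]
  set g : ℝ → ℝ → ℝ := fun y t => if t ≤ y then 1 else 0 with hgdef
  have hgm : ∀ y, Measurable (g y) :=
    fun y => Measurable.ite measurableSet_Iic measurable_const measurable_const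
  have hgind : ∀ y, (fun ωx => g y (X ωx)) = Set.indicator {ω | X ω ≤ y} (fun _ => (1:ℝ)) := by
    intro y
    funext ωx
    simp [hgdef, Set.indicator_apply, Set.mem_setOf_eq]
  have hgint : ∀ y, Integrable (fun ωx => g y (X ωx)) P := by
    intro y
    rw [hgind y]
    exact (integrable_const 1).indicator (hms y)
  have hgeq : ∀ y, ∫ ωx, g y (X ωx) ∂P = F y := by
    intro y
    rw [hgind y]
    exact MeasureTheory.integral_indicator_one (μ := P) (hms y)
  have hae0 := aux_slln_comp P X hX Xs hXs hindep hident f hfm hfint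
  have hae1 := aux_slln_comp P X hX Xs hXs hindep hident (g x) (hgm x) (hgint x)
  have hae2 := aux_slln_comp P X hX Xs hXs hindep hident (g y₂) (hgm y₂) (hgint y₂)
  have hae3 : ∀ᵐ ω ∂P, ∀ m : ℕ, Tendsto
      (fun n : ℕ => (∑ i ∈ Finset.range n, g (x - 1/((m:ℝ)+1)) (Xs i ω)) / n) atTop
      (𝓝 (∫ ωx, g (x - 1/((m:ℝ)+1)) (X ωx) ∂P)) :=
    MeasureTheory.ae_all_iff.2
      (fun m => aux_slln_comp P X hX Xs hXs hindep hident _ (hgm _) (hgint _))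
  filter_upwards [hae0, hae1, hae2, hae3] with ω h0 h1 h2 h3
  have hA' : Tendsto (fun n : ℕ =>
      (∑ i ∈ Finset.range n, (if Xs i ω ≤ x then Xs i ω else 0)) / n) atTop
      (𝓝 (∫ ωx in {ω | X ω ≤ x}, X ωx ∂P)) := by
    rw [← hInt_f_eq]
    simpa only [hfdef] using h0
  have hN' : Tendsto (fun n : ℕ =>
      (∑ i ∈ Finset.range n, (if Xs i ω ≤ x then (1:ℝ) else 0)) / n) atTop (𝓝 (F x)) := by
    rw [← hgeq x]
    simpa only [hgdef] using h1
  have hc' : Tendsto (fun n : ℕ =>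
      (∑ i ∈ Finset.range n, (if Xs i ω ≤ y₂ then (1:ℝ) else 0)) / n) atTop (𝓝 (F y₂)) := by
    rw [← hgeq y₂]
    simpa only [hgdef] using h2
  have hl' : ∀ m : ℕ, ∃ Fm, Fm < α ∧ Tendsto (fun n : ℕ =>
      (∑ i ∈ Finset.range n, (if Xs i ω ≤ x - 1/((m:ℝ)+1) then (1:ℝ) else 0)) / n)
      atTop (𝓝 Fm) := by
    intro m
    have hpos : (0:ℝ) < 1/((m:ℝ)+1) := by positivity
    refine ⟨F (x - 1/((m:ℝ)+1)), hFlt _ (by linarith), ?_⟩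
    have h4 := h3 m
    rw [hgeq _] at h4
    simpa only [hgdef] using h4
  have hdet := det_tendsto (fun i => Xs i ω) α x y₂ (F x) (F y₂)
    (∫ ωx in {ω | X ω ≤ x}, X ωx ∂P) hα0 hα1 hxy₂ hFx hFy₂ hA' hN' hc' hl'
  have htm : tailMean P X α
      = α⁻¹ * ((∫ ωx in {ω | X ω ≤ x}, X ωx ∂P) + x * (α - F x)) := rfl
  rw [htm]
  simp only [tailSum]
  exact hdet


end
end

section
/- Let X be an integrable real-valued random variable on a probability space (Ω,𝒜,P) and let α ∈ (0,1) be fixed. Then the Expected Shortfall equals the conditional value-at-risk: ES_α(X) = CVaR^α(X) = inf{ E[(X − s)⁻]/α − s : s ∈ ℝ }. -/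
open MeasureTheory ProbabilityTheory Filter
open scoped Classical

noncomputable section

variable {Ω : Type*} [MeasurableSpace Ω]

/-- Expected Shortfall coincides with conditional value-at-risk. -/
theorem es_eq_cvar (P : Measure Ω) [IsProbabilityMeasure P] (α : ℝ)
    (hα : α ∈ Set.Ioo (0:ℝ) 1)
    (X : Ω → ℝ) (hX : Measurable X) (hXint : Integrable X P) :
    ES P X α = CVaR P X α ∧
    CVaR P X α = sInf {y : ℝ | ∃ s : ℝ, y = (∫ ω, max (-(X ω - s)) 0 ∂P) / α - s} := by
  obtain ⟨hα0, hα1⟩ := hα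
  set S : Set ℝ := {x : ℝ | α ≤ (P {ω | X ω ≤ x}).toReal} with hS
  have hmeas : ∀ c : ℝ, MeasurableSet {ω | X ω ≤ c} := fun c => hX measurableSet_Iic
  -- S nonempty
  have hSne : S.Nonempty := by
    have hm : Monotone (fun n : ℕ => {ω | X ω ≤ (n:ℝ)}) := by
      intro a b hab ω hω
      simp only [Set.mem_setOf_eq] at hω ⊢
      exact le_trans hω (by exact_mod_cast hab)
    have hU : (⋃ n : ℕ, {ω | X ω ≤ (n:ℝ)}) = Set.univ := by
      ext ω
      simp only [Set.mem_iUnion, Set.mem_univ, iff_true]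
      obtain ⟨n, hn⟩ := exists_nat_ge (X ω)
      exact ⟨n, by simpa using hn⟩
    have ht := tendsto_measure_iUnion_atTop (μ := P) hm
    rw [hU, measure_univ] at ht
    have hlt : ENNReal.ofReal α < 1 := by
      rw [← ENNReal.ofReal_one]
      exact ENNReal.ofReal_lt_ofReal_iff_of_nonneg hα0.le |>.mpr hα1
    obtain ⟨n, hn⟩ := (ht.eventually (eventually_gt_nhds hlt)).exists
    exact ⟨(n:ℝ), (ENNReal.ofReal_le_iff_le_toReal (measure_ne_top P _)).mp hn.le⟩
  -- S bounded below
  have hSbdd : BddBelow S := by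
    have hm : Antitone (fun n : ℕ => {ω | X ω ≤ -(n:ℝ)}) := by
      intro a b hab ω hω
      simp only [Set.mem_setOf_eq] at hω ⊢
      refine le_trans hω (neg_le_neg ?_)
      exact_mod_cast hab
    have hI : (⋂ n : ℕ, {ω | X ω ≤ -(n:ℝ)}) = ∅ := by
      ext ω
      simp only [Set.mem_iInter, Set.mem_setOf_eq, Set.mem_empty_iff_false, iff_false, not_forall]
      obtain ⟨n, hn⟩ := exists_nat_gt (-(X ω))
      exact ⟨n, by push_neg; linarith⟩
    have ht := tendsto_measure_iInter_atTop (μ := P)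
      (fun n => (hmeas _).nullMeasurableSet) hm ⟨0, measure_ne_top P _⟩
    rw [hI, measure_empty] at ht
    have hpos : (0:ENNReal) < ENNReal.ofReal α := ENNReal.ofReal_pos.mpr hα0
    obtain ⟨n, hn⟩ := (ht.eventually (eventually_lt_nhds hpos)).exists
    refine ⟨-(n:ℝ), fun x hx => ?_⟩
    by_contra hlt
    push_neg at hlt
    have : (P {ω | X ω ≤ x}).toReal < α := by
      refine ENNReal.toReal_lt_of_lt_ofReal (lt_of_le_of_lt ?_ hn)
      exact measure_mono fun ω hω => le_trans hω hlt.le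
    exact absurd hx (by simpa [hS] using this.not_ge)
  set q : ℝ := sInf S with hq
  -- α ≤ F q  (right continuity)
  have hFq : α ≤ (P {ω | X ω ≤ q}).toReal := by
    have hmem : ∀ n : ℕ, ENNReal.ofReal α ≤ P {ω | X ω ≤ q + 1/(n+1)} := by
      intro n
      have hpos : (0:ℝ) < 1/((n:ℝ)+1) := by positivity
      obtain ⟨s, hsS, hslt⟩ := Real.lt_sInf_add_pos hSne hpos
      have h1 : α ≤ (P {ω | X ω ≤ s}).toReal := hsS
      have h2 : P {ω | X ω ≤ s} ≤ P {ω | X ω ≤ q + 1/(n+1)} :=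
        measure_mono fun ω hω => le_trans hω hslt.le
      exact le_trans ((ENNReal.ofReal_le_iff_le_toReal (measure_ne_top P _)).mpr h1) h2
    have hanti : Antitone (fun n : ℕ => {ω | X ω ≤ q + 1/((n:ℝ)+1)}) := by
      intro a b hab ω hω
      simp only [Set.mem_setOf_eq] at hω ⊢
      refine le_trans hω (add_le_add_right ?_ q)
      gcongr
    have hIeq : (⋂ n : ℕ, {ω | X ω ≤ q + 1/((n:ℝ)+1)}) = {ω | X ω ≤ q} := by
      ext ω
      simp only [Set.mem_iInter, Set.mem_setOf_eq]
      constructor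
      · intro h
        by_contra hc
        push_neg at hc
        obtain ⟨n, hn⟩ := exists_nat_one_div_lt (sub_pos.mpr hc)
        have := h n
        linarith
      · intro h n
        have hpos : (0:ℝ) < 1/((n:ℝ)+1) := by positivity
        linarith
    have ht := tendsto_measure_iInter_atTop (μ := P)
      (fun n => (hmeas _).nullMeasurableSet) hanti ⟨0, measure_ne_top P _⟩
    rw [hIeq] at ht
    have : ENNReal.ofReal α ≤ P {ω | X ω ≤ q} :=
      ge_of_tendsto ht (Eventually.of_forall hmem)
    exact (ENNReal.ofReal_le_iff_le_toReal (measure_ne_top P _)).mp this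
  -- P[X < q] ≤ α
  have hGq : (P {ω | X ω < q}).toReal ≤ α := by
    have hnot : ∀ n : ℕ, P {ω | X ω ≤ q - 1/((n:ℝ)+1)} ≤ ENNReal.ofReal α := by
      intro n
      have hpos : (0:ℝ) < 1/((n:ℝ)+1) := by positivity
      have hnotS : q - 1/((n:ℝ)+1) ∉ S := by
        intro hmem
        have := csInf_le hSbdd hmem
        rw [← hq] at this
        linarith
      have : (P {ω | X ω ≤ q - 1/((n:ℝ)+1)}).toReal < α := by
        by_contra hc
        push_neg at hc
        exact hnotS hc
      exact le_of_lt <| (ENNReal.lt_ofReal_iff_toReal_lt (measure_ne_top P _)).mpr this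
    have hmono : Monotone (fun n : ℕ => {ω | X ω ≤ q - 1/((n:ℝ)+1)}) := by
      intro a b hab ω hω
      simp only [Set.mem_setOf_eq] at hω ⊢
      refine le_trans hω (sub_le_sub_left ?_ q)
      gcongr
    have hUeq : (⋃ n : ℕ, {ω | X ω ≤ q - 1/((n:ℝ)+1)}) = {ω | X ω < q} := by
      ext ω
      simp only [Set.mem_iUnion, Set.mem_setOf_eq]
      constructor
      · rintro ⟨n, hn⟩
        have hpos : (0:ℝ) < 1/((n:ℝ)+1) := by positivity
        linarith
      · intro h
        obtain ⟨n, hn⟩ := exists_nat_one_div_lt (sub_pos.mpr h)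
        exact ⟨n, by linarith⟩
    have ht := tendsto_measure_iUnion_atTop (μ := P) hmono
    rw [hUeq] at ht
    have : P {ω | X ω < q} ≤ ENNReal.ofReal α :=
      le_of_tendsto ht (Eventually.of_forall hnot)
    exact ENNReal.toReal_le_of_le_ofReal hα0.le this
  -- integrability
  have hIntS : ∀ s : ℝ, Integrable (fun ω => max (s - X ω) 0) P :=
    fun s => ((integrable_const s).sub hXint).pos_part
  set A : Set Ω := {ω | X ω ≤ q} with hA
  have hAmeas : MeasurableSet A := hmeas q
  set Fq : ℝ := (P A).toReal with hFqdef
  set I : ℝ → ℝ := fun s => ∫ ω, max (s - X ω) 0 ∂P with hI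
  have hIq : I q = q * Fq - ∫ ω in A, X ω ∂P := by
    have h1 : (fun ω => max (q - X ω) 0) = A.indicator (fun ω => q - X ω) := by
      funext ω
      by_cases h : X ω ≤ q
      · rw [Set.indicator_of_mem (show ω ∈ A from h), max_eq_left (sub_nonneg.mpr h)]
      · rw [Set.indicator_of_notMem (show ω ∉ A from h),
          max_eq_right (sub_nonpos.mpr (le_of_not_ge h))]
    calc I q = ∫ ω, A.indicator (fun ω => q - X ω) ω ∂P := by rw [hI]; exact congrArg (∫ ω, · ω ∂P) h1
      _ = ∫ ω in A, (q - X ω) ∂P := integral_indicator hAmeas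
      _ = (∫ _ω in A, q ∂P) - ∫ ω in A, X ω ∂P :=
          integral_sub (integrable_const q) hXint.integrableOn
      _ = q * Fq - ∫ ω in A, X ω ∂P := by
          rw [setIntegral_const, measureReal_def, smul_eq_mul, mul_comm, hFqdef]
  have hkey : ∀ s : ℝ, I q - α * q ≤ I s - α * s := by
    intro s
    have hIqdef : (∫ ω, max (q - X ω) 0 ∂P) = I q := by rw [hI]
    rcases le_total q s with hqs | hsq
    · have hpt : ∀ ω, max (q - X ω) 0 + (s - q) * A.indicator (fun _ => (1:ℝ)) ω
          ≤ max (s - X ω) 0 := by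
        intro ω
        by_cases h : X ω ≤ q
        · rw [Set.indicator_of_mem (show ω ∈ A from h), max_eq_left (sub_nonneg.mpr h)]
          calc q - X ω + (s - q) * 1 = s - X ω := by ring
            _ ≤ max (s - X ω) 0 := le_max_left _ _
        · rw [Set.indicator_of_notMem (show ω ∉ A from h), mul_zero, add_zero]
          exact max_le_max (by linarith) le_rfl
      have hind : Integrable (fun ω => (s - q) * A.indicator (fun _ => (1:ℝ)) ω) P :=
        ((integrable_const (1:ℝ)).indicator hAmeas).const_mul _
      have hmono : (∫ ω, (max (q - X ω) 0 + (s - q) * A.indicator (fun _ => (1:ℝ)) ω) ∂P)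
          ≤ I s := integral_mono ((hIntS q).add hind) (hIntS s) hpt
      rw [integral_add (hIntS q) hind, integral_const_mul, integral_indicator hAmeas,
        setIntegral_const, measureReal_def, smul_eq_mul, mul_one] at hmono
      have h3 : (s - q) * α ≤ (s - q) * Fq :=
        mul_le_mul_of_nonneg_left hFq (sub_nonneg.mpr hqs)
      rw [hIqdef, ← hFqdef] at hmono
      linarith
    · set B : Set Ω := {ω | X ω < q} with hB
      have hBmeas : MeasurableSet B := hX measurableSet_Iio
      have hpt : ∀ ω, max (q - X ω) 0 + (s - q) * B.indicator (fun _ => (1:ℝ)) ω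
          ≤ max (s - X ω) 0 := by
        intro ω
        by_cases h : X ω < q
        · rw [Set.indicator_of_mem (show ω ∈ B from h), max_eq_left (sub_nonneg.mpr h.le)]
          calc q - X ω + (s - q) * 1 = s - X ω := by ring
            _ ≤ max (s - X ω) 0 := le_max_left _ _
        · rw [Set.indicator_of_notMem (show ω ∉ B from h), mul_zero, add_zero,
            max_eq_right (sub_nonpos.mpr (le_of_not_gt h))]
          exact le_max_right _ _
      have hind : Integrable (fun ω => (s - q) * B.indicator (fun _ => (1:ℝ)) ω) P :=
        ((integrable_const (1:ℝ)).indicator hBmeas).const_mul _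
      have hmono : (∫ ω, (max (q - X ω) 0 + (s - q) * B.indicator (fun _ => (1:ℝ)) ω) ∂P)
          ≤ I s := integral_mono ((hIntS q).add hind) (hIntS s) hpt
      rw [integral_add (hIntS q) hind, integral_const_mul, integral_indicator hBmeas,
        setIntegral_const, measureReal_def, smul_eq_mul, mul_one] at hmono
      have h3 : (s - q) * α ≤ (s - q) * (P B).toReal :=
        mul_le_mul_of_nonpos_left hGq (sub_nonpos.mpr hsq)
      rw [hIqdef] at hmono
      linarith
  have hglb : ∀ s : ℝ, I q / α - q ≤ I s / α - s := by
    intro s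
    have h2 := (div_le_div_iff_of_pos_right hα0).mpr (hkey s)
    rwa [sub_div, sub_div, mul_div_cancel_left₀ _ (ne_of_gt hα0),
      mul_div_cancel_left₀ _ (ne_of_gt hα0)] at h2
  have hES : ES P X α = I q / α - q := by
    have hlq : lowerQuantile P X α = q := rfl
    rw [ES, tailMean, hlq, ← hA, ← hFqdef, hIq]
    field_simp
    ring
  set T : Set ℝ := {y : ℝ | ∃ s : ℝ, y = (∫ ω, max (-(X ω - s)) 0 ∂P) / α - s} with hT
  have hTeq : ∀ s : ℝ, (∫ ω, max (-(X ω - s)) 0 ∂P) / α - s = I s / α - s := by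
    intro s
    rw [hI]
    simp only [neg_sub]
  have hmemT : ES P X α ∈ T := ⟨q, by rw [hES, hTeq q]⟩
  have hlb : ∀ y ∈ T, ES P X α ≤ y := by
    rintro y ⟨s, rfl⟩
    rw [hES, hTeq s]
    exact hglb s
  have hsInf : sInf T = ES P X α :=
    le_antisymm (csInf_le ⟨ES P X α, fun y hy => hlb y hy⟩ hmemT)
      (le_csInf ⟨_, hmemT⟩ hlb)
  exact ⟨hsInf.symm, rfl⟩

end
end

section
/- Let X be an integrable real-valued random variable on a probability space (Ω,𝒜,P) and let α ∈ (0,1) be fixed. Then for every s ∈ [x_{(α)}, x^{(α)}], ES_α(X) = −α⁻¹·( E[X·1_{X ≤ s}] + s·(α − P[X ≤ s]) ); in particular, the right-hand side does not depend on the choice of s in the interval [x_{(α)}, x^{(α)}], and the tail mean and Expected Shortfall of X depend only on the distribution of X. -/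
open MeasureTheory ProbabilityTheory Filter
open scoped Classical

noncomputable section

variable {Ω : Type*} [MeasurableSpace Ω]

/-- Representation of ES with any s in the quantile interval
(non-strict indicator). -/
theorem es_representation_le (P : Measure Ω) [IsProbabilityMeasure P] (α : ℝ)
    (hα : α ∈ Set.Ioo (0:ℝ) 1)
    (X : Ω → ℝ) (hX : Measurable X) (hXint : Integrable X P) :
    ∀ s ∈ Set.Icc (lowerQuantile P X α) (upperQuantile P X α),
      ES P X α = - (α⁻¹ * ((∫ ω in {ω | X ω ≤ s}, X ω ∂P)
        + s * (α - (P {ω | X ω ≤ s}).toReal))) := by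
  intro s hs
  obtain ⟨hqs, hsu⟩ := hs
  rcases eq_or_lt_of_le hqs with heq | hlt
  · rw [← heq]; rfl
  -- setup: pushforward measure and its cdf
  set μ : Measure ℝ := P.map X with hμ
  haveI : IsProbabilityMeasure μ := Measure.isProbabilityMeasure_map hX.aemeasurable
  set F : StieltjesFunction ℝ := ProbabilityTheory.cdf μ with hFdef
  have hpre : ∀ x : ℝ, {ω | X ω ≤ x} = X ⁻¹' Set.Iic x := fun x => rfl
  have hPmap : ∀ A : Set ℝ, MeasurableSet A → P (X ⁻¹' A) = μ A := fun A hA =>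
    (Measure.map_apply hX hA).symm
  have hF : ∀ x : ℝ, (P {ω | X ω ≤ x}).toReal = F x := by
    intro x
    rw [hpre, hPmap _ measurableSet_Iic, ProbabilityTheory.cdf_eq_real, measureReal_def]
  have hq : lowerQuantile P X α = sInf {x : ℝ | α ≤ F x} := by
    unfold lowerQuantile; congr 1; ext x; simp [hF]
  have hu : upperQuantile P X α = sInf {x : ℝ | α < F x} := by
    unfold upperQuantile; congr 1; ext x; simp [hF]
  set q := lowerQuantile P X α with hqd
  set u := upperQuantile P X α with hud
  -- the sets are nonempty and bounded below
  have hne : {x : ℝ | α ≤ F x}.Nonempty := by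
    have h1 : ∀ᶠ x in atTop, α < F x :=
      (ProbabilityTheory.tendsto_cdf_atTop μ).eventually (eventually_gt_nhds hα.2)
    obtain ⟨x, hx⟩ := h1.exists
    exact ⟨x, hx.le⟩
  obtain ⟨x0, hx0⟩ : ∃ x0 : ℝ, ∀ y ≤ x0, F y < α := by
    have h1 : ∀ᶠ x in atBot, F x < α :=
      (ProbabilityTheory.tendsto_cdf_atBot μ).eventually (eventually_lt_nhds hα.1)
    exact eventually_atBot.mp h1
  have hbdd : BddBelow {x : ℝ | α ≤ F x} := by
    refine ⟨x0, fun y hy => ?_⟩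
    by_contra h
    exact absurd hy (not_le.mpr (hx0 y (le_of_not_ge h)))
  have hbdd' : BddBelow {x : ℝ | α < F x} := by
    refine ⟨x0, fun y hy => ?_⟩
    by_contra h
    exact absurd hy.le (not_le.mpr (hx0 y (le_of_not_ge h)))
  -- α ≤ F q by right-continuity
  have hFq_ge : α ≤ F q := by
    have hforall : ∀ x > q, α ≤ F x := by
      intro x hx
      rw [hq] at hx
      obtain ⟨y, hy, hyx⟩ := (csInf_lt_iff hbdd hne).mp hx
      exact hy.trans (F.mono hyx.le)
    have htend : Tendsto F (nhdsWithin q (Set.Ioi q)) (nhds (F q)) :=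
      ((F.right_continuous q).tendsto).mono_left
        (nhdsWithin_mono q Set.Ioi_subset_Ici_self)
    exact ge_of_tendsto htend (eventually_nhdsWithin_of_forall fun x hx => hforall x hx)
  -- F t ≤ α for t < u
  have hFle : ∀ t < u, F t ≤ α := by
    intro t ht
    by_contra h
    have : u ≤ t := by
      rw [hu]; exact csInf_le hbdd' (lt_of_not_ge h)
    exact absurd ht (not_lt.mpr this)
  have hqu : q < u := lt_of_lt_of_le hlt hsu
  have hFq : F q = α := le_antisymm (hFle q hqu) hFq_ge
  -- left limit of F at s equals α
  have hll_le : Function.leftLim F s ≤ α := by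
    refine le_of_tendsto (F.mono.tendsto_leftLim s) ?_
    exact eventually_nhdsWithin_of_forall fun t ht =>
      hFle t (lt_of_lt_of_le ht hsu)
  have hll_ge : α ≤ Function.leftLim F s := hFq ▸ F.mono.le_leftLim hlt
  have hll : Function.leftLim F s = α := le_antisymm hll_le hll_ge
  -- measures of the intermediate intervals
  have hμIoo : μ (Set.Ioo q s) = 0 := by
    rw [← ProbabilityTheory.measure_cdf μ, StieltjesFunction.measure_Ioo, ← hFdef, hll, hFq,
      sub_self, ENNReal.ofReal_zero]
  have hμIoc : μ (Set.Ioc q s) = ENNReal.ofReal (F s - α) := by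
    rw [← ProbabilityTheory.measure_cdf μ, StieltjesFunction.measure_Ioc, ← hFdef, hFq]
  have hFs_ge : α ≤ F s := hFq ▸ F.mono hqs
  have hPB : (P (X ⁻¹' Set.Ioc q s)).toReal = F s - α := by
    rw [hPmap _ measurableSet_Ioc, hμIoc, ENNReal.toReal_ofReal (sub_nonneg.mpr hFs_ge)]
  -- split the integral
  set A : Set Ω := X ⁻¹' Set.Iic q with hA
  set B : Set Ω := X ⁻¹' Set.Ioc q s with hB
  have hAmeas : MeasurableSet A := hX measurableSet_Iic
  have hBmeas : MeasurableSet B := hX measurableSet_Ioc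
  have hdisj : Disjoint A B := (Set.Iic_disjoint_Ioc le_rfl).preimage X
  have hunion : A ∪ B = X ⁻¹' Set.Iic s := by
    rw [hA, hB, ← Set.preimage_union, Set.Iic_union_Ioc_eq_Iic hqs]
  have hsplit : (∫ ω in X ⁻¹' Set.Iic s, X ω ∂P)
      = (∫ ω in A, X ω ∂P) + (∫ ω in B, X ω ∂P) := by
    rw [← hunion]
    exact setIntegral_union hdisj hBmeas hXint.integrableOn hXint.integrableOn
  -- on B, X = s a.e.
  have hae : ∀ᵐ ω ∂P, X ω ∉ Set.Ioo q s := by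
    rw [ae_iff]
    have : {ω | ¬ X ω ∉ Set.Ioo q s} = X ⁻¹' Set.Ioo q s := by
      ext ω; simp
    rw [this, hPmap _ measurableSet_Ioo, hμIoo]
  have hintB : (∫ ω in B, X ω ∂P) = s * (F s - α) := by
    have hcongr : (∫ ω in B, X ω ∂P) = ∫ ω in B, s ∂P := by
      refine setIntegral_congr_ae hBmeas (hae.mono fun ω hω hωB => ?_)
      rcases hωB with ⟨h1, h2⟩
      by_contra hne'
      exact hω ⟨h1, lt_of_le_of_ne h2 hne'⟩
    rw [hcongr, setIntegral_const, smul_eq_mul, hB, measureReal_def, hPB, mul_comm]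
  -- finish
  show -tailMean P X α = _
  unfold tailMean
  rw [← hqd, hF q, hF s, hFq, hpre s, hsplit, hintB, hpre q, ← hA]
  ring


end
end

section
/- Let X be an integrable real-valued random variable on a probability space (Ω,𝒜,P) and let α ∈ (0,1) be fixed. Then for every s ∈ [x_{(α)}, x^{(α)}], ES_α(X) = −α⁻¹·( E[X·1_{X < s}] + s·(α − P[X < s]) ), where the indicator now uses the strict inequality X < s. -/
open MeasureTheory ProbabilityTheory Filter
open scoped Classical

noncomputable section

variable {Ω : Type*} [MeasurableSpace Ω]

-- helper lemmas
section helpers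
variable (P : Measure Ω) [IsProbabilityMeasure P] {α : ℝ} (X : Ω → ℝ)

lemma fin_ne_top (A : Set Ω) : P A ≠ ⊤ := (measure_lt_top P A).ne

lemma le_toReal_iff {A : Set Ω} : α ≤ (P A).toReal ↔ ENNReal.ofReal α ≤ P A :=
  (ENNReal.ofReal_le_iff_le_toReal (fin_ne_top P A)).symm

lemma bddBelow_qset (hX : Measurable X) (hα : 0 < α) :
    BddBelow {x : ℝ | α ≤ (P {ω | X ω ≤ x}).toReal} := by
  have h0 : Tendsto (fun n : ℕ => P {ω | X ω ≤ -(n : ℝ)}) atTop (nhds 0) := by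
    have h := tendsto_measure_iInter_atTop (μ := P) (s := fun n : ℕ => {ω | X ω ≤ -(n : ℝ)})
      (fun n => (measurableSet_le hX measurable_const).nullMeasurableSet)
      (fun m n hmn ω (hω : X ω ≤ -(n:ℝ)) => show X ω ≤ -(m:ℝ) from
        le_trans hω (by have : (m:ℝ) ≤ n := Nat.cast_le.2 hmn; linarith))
      ⟨0, fin_ne_top P _⟩
    have : ⋂ n : ℕ, {ω | X ω ≤ -(n : ℝ)} = ∅ := by
      ext ω; simp only [Set.mem_iInter, Set.mem_setOf_eq, Set.mem_empty_iff_false, iff_false,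
        not_forall, not_le]
      obtain ⟨n, hn⟩ := exists_nat_gt (-(X ω))
      exact ⟨n, by linarith⟩
    rw [this, measure_empty] at h
    exact h
  have hev : ∀ᶠ n : ℕ in atTop, P {ω | X ω ≤ -(n : ℝ)} < ENNReal.ofReal α := by
    exact h0.eventually (eventually_lt_nhds (by simpa using hα))
  obtain ⟨n, hn⟩ := hev.exists
  refine ⟨-(n : ℝ), fun x hx => ?_⟩
  by_contra hlt
  push_neg at hlt
  have : P {ω | X ω ≤ x} ≤ P {ω | X ω ≤ -(n : ℝ)} :=
    measure_mono (fun ω hω => le_trans hω hlt.le)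
  have := lt_of_le_of_lt this hn
  rw [Set.mem_setOf_eq, le_toReal_iff] at hx
  exact absurd (lt_of_le_of_lt hx this) (lt_irrefl _)

lemma qset_nonempty (hX : Measurable X) (hα1 : α < 1) :
    {x : ℝ | α ≤ (P {ω | X ω ≤ x}).toReal}.Nonempty := by
  have h1 : Tendsto (fun n : ℕ => P {ω | X ω ≤ (n : ℝ)}) atTop
      (nhds (P (⋃ n : ℕ, {ω | X ω ≤ (n : ℝ)}))) :=
    tendsto_measure_iUnion_atTop (fun m n hmn ω (hω : X ω ≤ (m:ℝ)) =>
      show X ω ≤ (n:ℝ) from le_trans hω (Nat.cast_le.2 hmn))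
  have hU : (⋃ n : ℕ, {ω | X ω ≤ (n : ℝ)}) = Set.univ := by
    ext ω; simp only [Set.mem_iUnion, Set.mem_setOf_eq, Set.mem_univ, iff_true]
    obtain ⟨n, hn⟩ := exists_nat_gt (X ω)
    exact ⟨n, hn.le⟩
  rw [hU, measure_univ] at h1
  have hev : ∀ᶠ n : ℕ in atTop, ENNReal.ofReal α < P {ω | X ω ≤ (n : ℝ)} :=
    h1.eventually (eventually_gt_nhds (ENNReal.ofReal_lt_one.2 hα1))
  obtain ⟨n, hn⟩ := hev.exists
  exact ⟨n, (le_toReal_iff P).2 hn.le⟩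

/-- P[X ≤ q] ≥ α. -/
lemma alpha_le_lower (hX : Measurable X) (hα : α ∈ Set.Ioo (0:ℝ) 1) :
    α ≤ (P {ω | X ω ≤ lowerQuantile P X α}).toReal := by
  set q := lowerQuantile P X α with hq
  have hbdd := bddBelow_qset P X hX hα.1
  have hne := qset_nonempty P X hX hα.2
  -- for each n, there is x in the set with x < q + 1/(n+1)
  have key : ∀ n : ℕ, ENNReal.ofReal α ≤ P {ω | X ω ≤ q + 1/(n+1)} := by
    intro n
    have hq' : q = sInf {x : ℝ | α ≤ (P {ω | X ω ≤ x}).toReal} := hq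
    obtain ⟨x, hx, hxlt⟩ := (csInf_lt_iff hbdd hne).1
      (show sInf {x : ℝ | α ≤ (P {ω | X ω ≤ x}).toReal} < q + 1/(n+1) by
        rw [← hq']
        have : (0:ℝ) < 1/((n:ℝ)+1) := by positivity
        linarith)
    rw [Set.mem_setOf_eq, le_toReal_iff] at hx
    exact le_trans hx (measure_mono (fun ω hω => le_trans hω hxlt.le))
  have hInter : (⋂ n : ℕ, {ω | X ω ≤ q + 1/(n+1)}) = {ω | X ω ≤ q} := by
    ext ω
    simp only [Set.mem_iInter, Set.mem_setOf_eq]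
    constructor
    · intro h
      by_contra hlt
      push_neg at hlt
      obtain ⟨n, hn⟩ := exists_nat_gt (1 / (X ω - q))
      have hpos : 0 < X ω - q := by linarith
      have h1 : 1/(n+1 : ℝ) < X ω - q := by
        rw [div_lt_iff₀ (by positivity)]
        rw [div_lt_iff₀ hpos] at hn
        nlinarith
      linarith [h n]
    · intro h n
      have : (0:ℝ) < 1/(n+1) := by positivity
      linarith
  have htend := tendsto_measure_iInter_atTop (μ := P) (s := fun n : ℕ => {ω | X ω ≤ q + 1/(n+1)})
    (fun n => (measurableSet_le hX measurable_const).nullMeasurableSet)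
    (fun m n hmn ω (hω : X ω ≤ q + 1/((n:ℝ)+1)) => show X ω ≤ q + 1/((m:ℝ)+1) from by
      have h1 : (1:ℝ)/(n+1) ≤ 1/(m+1) := by
        apply one_div_le_one_div_of_le (by positivity)
        have : (m:ℝ) ≤ n := Nat.cast_le.2 hmn; linarith
      linarith) ⟨0, fin_ne_top P _⟩
  rw [hInter] at htend
  have := ge_of_tendsto htend (Eventually.of_forall key)
  exact (le_toReal_iff P).2 this

/-- P[X ≤ x] ≤ α for x < upper quantile. -/
lemma le_alpha_of_lt_upper (hX : Measurable X) (hα : α ∈ Set.Ioo (0:ℝ) 1) {x : ℝ}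
    (hx : x < upperQuantile P X α) : (P {ω | X ω ≤ x}).toReal ≤ α := by
  by_contra h
  push_neg at h
  have hbdd : BddBelow {x : ℝ | α < (P {ω | X ω ≤ x}).toReal} := by
    obtain ⟨m, hm⟩ := bddBelow_qset P X hX hα.1
    exact ⟨m, fun y hy => hm (show α ≤ (P {ω | X ω ≤ y}).toReal from le_of_lt hy)⟩
  have : upperQuantile P X α ≤ x := csInf_le hbdd h
  linarith

end helpers

/-- Representation of ES with any s in the quantile interval
(strict indicator). -/
theorem es_representation_lt (P : Measure Ω) [IsProbabilityMeasure P] (α : ℝ)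
    (hα : α ∈ Set.Ioo (0:ℝ) 1)
    (X : Ω → ℝ) (hX : Measurable X) (hXint : Integrable X P) :
    ∀ s ∈ Set.Icc (lowerQuantile P X α) (upperQuantile P X α),
      ES P X α = - (α⁻¹ * ((∫ ω in {ω | X ω < s}, X ω ∂P)
        + s * (α - (P {ω | X ω < s}).toReal))) := by
  intro s hs
  set q := lowerQuantile P X α with hq
  rcases eq_or_lt_of_le hs.1 with heq | hlt
  · -- s = q
    subst heq
    rw [ES, tailMean, neg_inj, ← hq]
    have hdisj : Disjoint {ω | X ω < q} {ω | X ω = q} := by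
      rw [Set.disjoint_left]; intro ω h1 h2
      exact absurd h2 (ne_of_lt h1)
    have hunion : {ω | X ω ≤ q} = {ω | X ω < q} ∪ {ω | X ω = q} := by
      ext ω; simp [le_iff_lt_or_eq]
    have hmeq : MeasurableSet {ω | X ω = q} := hX (measurableSet_singleton q)
    have hI : ∫ ω in {ω | X ω ≤ q}, X ω ∂P
        = (∫ ω in {ω | X ω < q}, X ω ∂P) + q * (P {ω | X ω = q}).toReal := by
      rw [hunion, setIntegral_union hdisj hmeq hXint.integrableOn hXint.integrableOn]
      congr 1
      rw [setIntegral_congr_fun hmeq (g := fun _ => q) (fun ω hω => hω)]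
      simp [mul_comm, measureReal_def]
    have hP : (P {ω | X ω ≤ q}).toReal
        = (P {ω | X ω < q}).toReal + (P {ω | X ω = q}).toReal := by
      rw [hunion, measure_union hdisj hmeq, ENNReal.toReal_add (fin_ne_top P _) (fin_ne_top P _)]
    rw [hI, hP]; ring
  · -- q < s
    have hqu : q < upperQuantile P X α := lt_of_lt_of_le hlt hs.2
    have hqα : (P {ω | X ω ≤ q}).toReal = α :=
      le_antisymm (le_alpha_of_lt_upper P X hX hα hqu) (alpha_le_lower P X hX hα)
    -- sequence c n = s - (s-q)/(n+2)
    set c : ℕ → ℝ := fun n => s - (s - q)/(n + 2) with hc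
    have hcq : ∀ n, q < c n := by
      intro n
      have h2 : (s - q)/((n:ℝ) + 2) < s - q := by
        rw [div_lt_iff₀ (by positivity)]
        nlinarith [Nat.cast_nonneg (α := ℝ) n, sub_pos.2 hlt]
      simp only [hc]; linarith
    have hcs : ∀ n, c n < s := by
      intro n
      have : (0:ℝ) < (s - q)/((n:ℝ) + 2) := div_pos (sub_pos.2 hlt) (by positivity)
      simp only [hc]; linarith
    have hcα : ∀ n, P {ω | X ω ≤ c n} = ENNReal.ofReal α := by
      intro n
      have h1 : α ≤ (P {ω | X ω ≤ c n}).toReal := by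
        refine le_trans (alpha_le_lower P X hX hα) ?_
        exact ENNReal.toReal_mono (fin_ne_top P _)
          (measure_mono (fun ω hω => le_trans hω (hcq n).le))
      have h2 : (P {ω | X ω ≤ c n}).toReal ≤ α :=
        le_alpha_of_lt_upper P X hX hα (lt_of_lt_of_le (hcs n) hs.2)
      rw [← ENNReal.ofReal_toReal (fin_ne_top P {ω | X ω ≤ c n})]
      rw [le_antisymm h2 h1]
    have hmono : Monotone fun n : ℕ => {ω | X ω ≤ c n} := by
      intro m n hmn ω (hω : X ω ≤ c m)
      refine Set.mem_setOf_eq ▸ le_trans hω ?_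
      simp only [hc, sub_le_sub_iff_left]
      apply div_le_div_of_nonneg_left (by linarith [sub_pos.2 hlt]) (by positivity)
      have : (m:ℝ) ≤ n := Nat.cast_le.2 hmn; linarith
    have hU : (⋃ n, {ω | X ω ≤ c n}) = {ω | X ω < s} := by
      ext ω
      simp only [Set.mem_iUnion, Set.mem_setOf_eq]
      constructor
      · rintro ⟨n, hn⟩; exact lt_of_le_of_lt hn (hcs n)
      · intro h
        have hct : Tendsto c atTop (nhds s) := by
          have : Tendsto (fun n : ℕ => (s - q)/((n:ℝ) + 2)) atTop (nhds 0) := by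
            apply Tendsto.div_atTop tendsto_const_nhds
            exact tendsto_atTop_add_const_right _ 2 tendsto_natCast_atTop_atTop
          simpa using tendsto_const_nhds.sub this
        obtain ⟨n, hn⟩ := (hct.eventually (eventually_gt_nhds h)).exists
        exact ⟨n, hn.le⟩
    have hsα : P {ω | X ω < s} = ENNReal.ofReal α := by
      rw [← hU, Directed.measure_iUnion hmono.directed_le]
      simp [hcα]
    have hqP : P {ω | X ω ≤ q} = ENNReal.ofReal α := by
      rw [← ENNReal.ofReal_toReal (fin_ne_top P {ω | X ω ≤ q}), hqα]
    have hsub : {ω | X ω ≤ q} ⊆ {ω | X ω < s} := fun ω hω => lt_of_le_of_lt hω hlt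
    have hdiff : P ({ω | X ω < s} \ {ω | X ω ≤ q}) = 0 := by
      rw [measure_diff hsub (measurableSet_le hX measurable_const).nullMeasurableSet
        (fin_ne_top P _), hsα, hqP, tsub_self]
    have haeq : {ω | X ω ≤ q} =ᵐ[P] {ω | X ω < s} := by
      rw [MeasureTheory.ae_eq_set]
      constructor
      · have hempty : {ω | X ω ≤ q} \ {ω | X ω < s} = (∅ : Set Ω) := by
          ext ω; exact ⟨fun hω => (hω.2 (hsub hω.1)).elim, fun h => h.elim⟩
        simp [hempty]
      · exact hdiff
    have hint : (∫ ω in {ω | X ω ≤ q}, X ω ∂P) = ∫ ω in {ω | X ω < s}, X ω ∂P :=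
      setIntegral_congr_set haeq
    rw [ES, tailMean, neg_inj, ← hq, hint, hqα,
      show (P {ω | X ω < s}).toReal = α by rw [hsα, ENNReal.toReal_ofReal hα.1.le]]
    ring

end
end

section
/- Let α ∈ (0,1) be fixed and X a real-valued random variable on a probability space (Ω,𝒜,P). Suppose f : ℝ → ℝ satisfies E[(f∘X)⁻] < ∞, f(x) ≤ f(x_{(α)}) for all x < x_{(α)}, and f(x) ≥ f(x_{(α)}) for all x > x_{(α)}. Let A ∈ 𝒜 be an event with P[A] ≥ α and E[|f∘X|·1_A] < ∞. Then TM_α(f∘X) ≤ E[f∘X | A]. -/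
open MeasureTheory ProbabilityTheory Filter
open scoped Classical

noncomputable section

variable {Ω : Type*} [MeasurableSpace Ω]

/-- Neyman–Pearson type inequality: the tail mean of f∘X is dominated by
the conditional expectation of f∘X given any event of probability at least α. -/
theorem tailMean_le_condExp (P : Measure Ω) [IsProbabilityMeasure P] (α : ℝ)
    (hα : α ∈ Set.Ioo (0:ℝ) 1)
    (X : Ω → ℝ) (hX : Measurable X) (f : ℝ → ℝ) (hf : Measurable f)
    (hfint : Integrable (fun ω => max (-(f (X ω))) 0) P)
    (hfle : ∀ x < lowerQuantile P X α, f x ≤ f (lowerQuantile P X α))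
    (hfge : ∀ x, lowerQuantile P X α < x → f (lowerQuantile P X α) ≤ f x)
    (A : Set Ω) (hA : MeasurableSet A) (hPA : α ≤ (P A).toReal)
    (hAint : Integrable (fun ω => |f (X ω)|) (P.restrict A)) :
    tailMean P (fun ω => f (X ω)) α ≤ condExpEvent P (fun ω => f (X ω)) A := by
  set Y : Ω → ℝ := fun ω => f (X ω) with hYdef
  have hY : Measurable Y := hf.comp hX
  simp only [tailMean, condExpEvent]
  set s : ℝ := lowerQuantile P Y α with hsdef
  set B : Set Ω := {ω | Y ω ≤ s} with hBdef
  have hB : MeasurableSet B := measurableSet_le hY measurable_const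
  have hαpos : 0 < α := hα.1
  have hp : 0 < (P A).toReal := lt_of_lt_of_le hαpos hPA
  -- integrability of Y on B
  have hIB : IntegrableOn Y B P := by
    apply Integrable.mono' ((integrable_const |s|).add hfint.restrict)
      hY.aestronglyMeasurable.restrict
    rw [ae_restrict_iff' hB]
    filter_upwards with ω hω
    have hω' : Y ω ≤ s := hω
    show ‖Y ω‖ ≤ |s| + max (-(Y ω)) 0
    rw [Real.norm_eq_abs]
    have h1 : -(Y ω) ≤ max (-(Y ω)) 0 := le_max_left _ _
    have h2 : (0:ℝ) ≤ max (-(Y ω)) 0 := le_max_right _ _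
    rcases abs_cases (Y ω) with ⟨h, _⟩ | ⟨h, _⟩ <;>
      rw [h] <;> linarith [le_abs_self s, abs_nonneg s]
  have hIA : IntegrableOn Y A P := by
    refine (integrable_norm_iff hY.aestronglyMeasurable.restrict).mp ?_
    simpa [Real.norm_eq_abs] using hAint
  have hcB : IntegrableOn (fun _ : Ω => s) B P :=
    integrableOn_const (measure_ne_top P B)
  have hcA : IntegrableOn (fun _ : Ω => s) A P :=
    integrableOn_const (measure_ne_top P A)
  -- inequality 1: ∫_B Y ≤ s * P(B)
  have h1 : (∫ ω in B, Y ω ∂P) ≤ s * (P B).toReal := by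
    calc (∫ ω in B, Y ω ∂P) ≤ ∫ _ω in B, s ∂P :=
          setIntegral_mono_on hIB hcB hB (fun ω hω => hω)
      _ = s * (P B).toReal := by rw [setIntegral_const, smul_eq_mul, mul_comm, measureReal_def]
  -- inequality 2: ∫_B (Y - s) ≤ ∫_A (Y - s)
  have h2 : (∫ ω in B, (Y ω - s) ∂P) ≤ ∫ ω in A, (Y ω - s) ∂P := by
    rw [← integral_indicator hB, ← integral_indicator hA]
    have iB : Integrable (B.indicator (fun ω => Y ω - s)) P :=
      MeasureTheory.IntegrableOn.integrable_indicator (hIB.sub hcB) hB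
    have iA : Integrable (A.indicator (fun ω => Y ω - s)) P :=
      MeasureTheory.IntegrableOn.integrable_indicator (hIA.sub hcA) hA
    apply integral_mono iB iA
    intro ω
    rw [Set.indicator_apply, Set.indicator_apply]
    split_ifs with hωB hωA hωA
    · exact le_refl _
    · have h : Y ω ≤ s := hωB
      linarith
    · have h : ¬ (Y ω ≤ s) := hωB
      linarith [not_le.mp h]
    · exact le_refl _
  have h2' : (∫ ω in B, Y ω ∂P) - s * (P B).toReal
      ≤ (∫ ω in A, Y ω ∂P) - s * (P A).toReal := by
    have eB : (∫ ω in B, (Y ω - s) ∂P) = (∫ ω in B, Y ω ∂P) - s * (P B).toReal := by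
      rw [integral_sub hIB hcB, setIntegral_const, smul_eq_mul, mul_comm, measureReal_def]
    have eA : (∫ ω in A, (Y ω - s) ∂P) = (∫ ω in A, Y ω ∂P) - s * (P A).toReal := by
      rw [integral_sub hIA hcA, setIntegral_const, smul_eq_mul, mul_comm, measureReal_def]
    linarith [h2, eB.symm.le, eA.le]
  -- arithmetic
  set IB : ℝ := ∫ ω in B, Y ω ∂P
  set IA : ℝ := ∫ ω in A, Y ω ∂P
  set b : ℝ := (P B).toReal
  set p : ℝ := (P A).toReal
  rw [le_div_iff₀ hp]
  have key : (IB + s * (α - b)) * p ≤ IA * α := by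
    nlinarith [mul_nonneg (sub_nonneg.2 hPA) (sub_nonneg.2 h1), hαpos, hp, h2']
  calc α⁻¹ * (IB + s * (α - b)) * p = α⁻¹ * ((IB + s * (α - b)) * p) := by ring
    _ ≤ α⁻¹ * (IA * α) := mul_le_mul_of_nonneg_left key (inv_pos.2 hαpos).le
    _ = IA := by field_simp

end
end
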